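/- arXiv:2307.04026 — 3 statements merged into one kernel-verified Lean document; each statement's English description precedes it below -/
import Mathlib

section
/- Let f : S → ℝ be a bounded function on the family S of closed counterclockwise arcs of the unit circle S¹, with f of every degenerate arc equal to 0, and suppose that for any points x₁, x₂, x₃, x₄ in counterclockwise order on S¹ (so that the arc from x₂ to x₃ is contained in the arc from x₁ to x₄) we have f(arc(x₁,x₃)) + f(arc(x₂,x₄)) ≥ f(arc(x₁,x₄)) + f(arc(x₂,x₃)). For n ≥ 3, define Mₙ = sup { Σ_{S∈X} f(S) : X ⊂ S is a tiling of S¹ with |X| = n }. Then the sequence {Mₙ} is concave, i.e., M_{n-1} + M_{n+1} ≤ 2Mₙ for all n ≥ 4. -/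
open Finset

/-- `Mseq f n` : the supremum of `∑ f(arcs)` over tilings of the circle by `n` arcs,
where arcs are parametrized by pairs of angles and a tiling by `n` arcs corresponds to a
monotone sequence of `n+1` angles starting at some `x 0` and ending at `x 0 + 2π`. -/
noncomputable def Mseq (f : ℝ → ℝ → ℝ) (n : ℕ) : ℝ :=
  sSup {s | ∃ x : Fin (n + 1) → ℝ, Monotone x ∧ x (Fin.last n) = x 0 + 2 * Real.pi ∧
    s = ∑ i : Fin n, f (x i.castSucc) (x i.succ)}

namespace Stmt0Aux

def TN (N : ℕ) (x : ℕ → ℝ) : Prop :=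
  (∀ ⦃i j : ℕ⦄, i ≤ j → j ≤ N → x i ≤ x j) ∧ x N = x 0 + 2 * Real.pi

noncomputable def TS (f : ℝ → ℝ → ℝ) (N : ℕ) (x : ℕ → ℝ) : ℝ :=
  ∑ t ∈ Finset.range N, f (x t) (x (t + 1))

variable {f : ℝ → ℝ → ℝ}

lemma hper_int (hper : ∀ a b : ℝ, f (a + 2*Real.pi) (b + 2*Real.pi) = f a b) :
    ∀ (z : ℤ) (a b : ℝ), f (a + 2*Real.pi*z) (b + 2*Real.pi*z) = f a b := by
  intro z
  induction z using Int.induction_on with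
  | zero => intro a b; norm_num
  | succ i ih =>
      intro a b
      have e1 : a + 2*Real.pi*((i : ℤ) + 1 : ℤ) = (a + 2*Real.pi*(i:ℤ)) + 2*Real.pi := by
        push_cast; ring
      have e2 : b + 2*Real.pi*((i : ℤ) + 1 : ℤ) = (b + 2*Real.pi*(i:ℤ)) + 2*Real.pi := by
        push_cast; ring
      rw [e1, e2, hper, ih]
  | pred i ih =>
      intro a b
      have key := hper (a + 2*Real.pi*(-(i:ℤ) - 1 : ℤ)) (b + 2*Real.pi*(-(i:ℤ) - 1 : ℤ))
      have e1 : a + 2*Real.pi*(-(i:ℤ) - 1 : ℤ) + 2*Real.pi = a + 2*Real.pi*(-(i:ℤ) : ℤ) := by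
        push_cast; ring
      have e2 : b + 2*Real.pi*(-(i:ℤ) - 1 : ℤ) + 2*Real.pi = b + 2*Real.pi*(-(i:ℤ) : ℤ) := by
        push_cast; ring
      rw [e1, e2, ih] at key
      exact key.symm

lemma shift_tiling {N : ℕ} {x : ℕ → ℝ} (c : ℝ) (hx : TN N x) :
    TN N (fun t => x t + c) := by
  refine ⟨fun i j hij hj => by simpa using hx.1 hij hj, ?_⟩
  simp only
  rw [hx.2]; ring

lemma shift_sum (hper : ∀ a b : ℝ, f (a + 2*Real.pi) (b + 2*Real.pi) = f a b)
    {N : ℕ} {x : ℕ → ℝ} (z : ℤ) :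
    TS f N (fun t => x t + 2*Real.pi*z) = TS f N x := by
  unfold TS
  exact Finset.sum_congr rfl fun t _ => hper_int hper z _ _

noncomputable def rotN (N k : ℕ) (x : ℕ → ℝ) : ℕ → ℝ :=
  fun t => if k + t ≤ N then x (k + t) else x (k + t - N) + 2 * Real.pi

lemma rotN_apply_le {N k t : ℕ} {x : ℕ → ℝ} (h : k + t ≤ N) :
    rotN N k x t = x (k + t) := if_pos h

lemma rotN_apply_ge {N k t : ℕ} {x : ℕ → ℝ} (hx : TN N x) (h : N ≤ k + t) :
    rotN N k x t = x (k + t - N) + 2 * Real.pi := by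
  rcases eq_or_lt_of_le h with heq | hlt
  · have h1 : k + t ≤ N := le_of_eq heq.symm
    rw [rotN]
    simp only [if_pos h1]
    have e : k + t - N = 0 := by omega
    rw [e, ← heq, hx.2]
  · exact if_neg (by omega)

lemma rotN_tiling {N k : ℕ} {x : ℕ → ℝ} (hk : k ≤ N) (hx : TN N x) :
    TN N (rotN N k x) := by
  have pi2 : (0:ℝ) ≤ 2 * Real.pi := by positivity
  constructor
  · intro i j hij hj
    by_cases h1 : k + i ≤ N
    · by_cases h2 : k + j ≤ N
      · rw [rotN_apply_le h1, rotN_apply_le h2]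
        exact hx.1 (by omega) h2
      · rw [rotN_apply_le h1, rotN_apply_ge hx (by omega)]
        have hA : x (k + i) ≤ x N := hx.1 h1 le_rfl
        rw [hx.2] at hA
        have h3 : x 0 ≤ x (k + j - N) := hx.1 (Nat.zero_le _) (by omega)
        linarith
    · rw [rotN_apply_ge hx (by omega), rotN_apply_ge hx (by omega)]
      have : x (k + i - N) ≤ x (k + j - N) := hx.1 (by omega) (by omega)
      linarith
  · rw [rotN_apply_ge hx (by omega), rotN_apply_le (by omega)]
    have e1 : k + N - N = k := by omega
    have e2 : k + 0 = k := rfl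
    rw [e1, e2]

lemma rotN_sum (hper : ∀ a b : ℝ, f (a + 2*Real.pi) (b + 2*Real.pi) = f a b)
    {N k : ℕ} {x : ℕ → ℝ} (hk : k ≤ N) (hx : TN N x) :
    TS f N (rotN N k x) = TS f N x := by
  unfold TS
  have hsplit : ∑ t ∈ Finset.range N, f (rotN N k x t) (rotN N k x (t+1))
      = (∑ t ∈ Finset.Ico 0 (N-k), f (rotN N k x t) (rotN N k x (t+1)))
        + ∑ t ∈ Finset.Ico (N-k) N, f (rotN N k x t) (rotN N k x (t+1)) := by
    rw [Finset.sum_Ico_consecutive _ (Nat.zero_le _) (by omega), ← Finset.range_eq_Ico]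
  rw [hsplit]
  have h1 : ∑ t ∈ Finset.Ico 0 (N-k), f (rotN N k x t) (rotN N k x (t+1))
      = ∑ j ∈ Finset.Ico k N, f (x j) (x (j+1)) := by
    have hr := Finset.sum_Ico_eq_sum_range (fun j => f (x j) (x (j+1))) k N
    rw [hr, Nat.Ico_zero_eq_range]
    refine Finset.sum_congr rfl fun t ht => ?_
    simp only [Finset.mem_range] at ht
    rw [rotN_apply_le (by omega), rotN_apply_le (by omega)]
    have e2 : k + (t + 1) = k + t + 1 := by omega
    rw [e2]
  have h2 : ∑ t ∈ Finset.Ico (N-k) N, f (rotN N k x t) (rotN N k x (t+1))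
      = ∑ j ∈ Finset.Ico 0 k, f (x j) (x (j+1)) := by
    have hL := Finset.sum_Ico_eq_sum_range
      (fun t => f (rotN N k x t) (rotN N k x (t+1))) (N-k) N
    have e : N - (N - k) = k := by omega
    rw [e] at hL
    rw [hL, Nat.Ico_zero_eq_range]
    refine Finset.sum_congr rfl fun t ht => ?_
    simp only [Finset.mem_range] at ht
    rw [rotN_apply_ge hx (by omega), rotN_apply_ge hx (by omega)]
    have e1 : k + (N - k + t) - N = t := by omega
    have e2 : k + (N - k + t + 1) - N = t + 1 := by omega
    rw [e1, e2, hper]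
  rw [h1, h2, add_comm, Finset.sum_Ico_consecutive _ (Nat.zero_le _) hk, Finset.range_eq_Ico]

variable {f : ℝ → ℝ → ℝ}

/-- transposition of `i` and `i+1` on ℕ -/
def sw (i : ℕ) : ℕ → ℕ := fun t => if t = i then i+1 else if t = i+1 then i else t

def swapf (i : ℕ) (g : ℕ → ℝ) : ℕ → ℝ := fun t => g (sw i t)

lemma sw_invol (i t : ℕ) : sw i (sw i t) = t := by
  unfold sw; split_ifs <;> omega

lemma sw_lt {i N t : ℕ} (h : i + 1 < N) (ht : t < N) : sw i t < N := by
  unfold sw; split_ifs <;> omega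

lemma swapf_of_ne {i : ℕ} {g : ℕ → ℝ} {t : ℕ} (h1 : t ≠ i) (h2 : t ≠ i+1) :
    swapf i g t = g t := by
  unfold swapf sw; rw [if_neg h1, if_neg h2]

lemma swapf_at1 (i : ℕ) (g : ℕ → ℝ) : swapf i g i = g (i+1) := by
  unfold swapf sw; rw [if_pos rfl]

lemma swapf_at2 (i : ℕ) (g : ℕ → ℝ) : swapf i g (i+1) = g i := by
  unfold swapf sw; rw [if_neg (by omega), if_pos rfl]

noncomputable def invN (N : ℕ) (g : ℕ → ℝ) : ℕ :=
  (((Finset.range N) ×ˢ (Finset.range N)).filter fun p => p.1 < p.2 ∧ g p.2 < g p.1).card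

lemma invN_le (N : ℕ) (g : ℕ → ℝ) : invN N g ≤ N * N := by
  calc invN N g ≤ ((Finset.range N) ×ˢ (Finset.range N)).card := Finset.card_filter_le _ _
  _ = N * N := by rw [Finset.card_product, Finset.card_range]

lemma invN_pos {N i : ℕ} {g : ℕ → ℝ} (h : i + 1 < N) (hgt : g (i+1) < g i) :
    1 ≤ invN N g := by
  have : (i, i+1) ∈ ((Finset.range N) ×ˢ (Finset.range N)).filter
      fun p => p.1 < p.2 ∧ g p.2 < g p.1 := by
    simp only [Finset.mem_filter, Finset.mem_product, Finset.mem_range]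
    exact ⟨⟨by omega, h⟩, by omega, hgt⟩
  exact Finset.card_pos.2 ⟨_, this⟩

lemma invN_swap_lt {N i : ℕ} {g : ℕ → ℝ} (h : i + 1 < N) (hgt : g (i+1) < g i) :
    invN N (swapf i g) < invN N g := by
  classical
  set S := ((Finset.range N) ×ˢ (Finset.range N)).filter
      (fun p => p.1 < p.2 ∧ g p.2 < g p.1) with hS
  set S2 := ((Finset.range N) ×ˢ (Finset.range N)).filter
      (fun p => p.1 < p.2 ∧ swapf i g p.2 < swapf i g p.1) with hS2
  have hmem : (i, i+1) ∈ S := by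
    simp only [hS, Finset.mem_filter, Finset.mem_product, Finset.mem_range]
    exact ⟨⟨by omega, h⟩, by omega, hgt⟩
  have hcard : S2.card ≤ (S.erase (i, i+1)).card := by
    apply Finset.card_le_card_of_injOn (fun p => (sw i p.1, sw i p.2))
    · intro p hp
      simp only [Finset.mem_coe, hS2, Finset.mem_filter, Finset.mem_product, Finset.mem_range] at hp
      obtain ⟨⟨hp1, hp2⟩, hlt, hinv⟩ := hp
      have hne : ¬(p.1 = i ∧ p.2 = i+1) := by
        rintro ⟨e1, e2⟩
        rw [e1, e2] at hinv
        rw [swapf_at1, swapf_at2] at hinv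
        linarith
      refine Finset.mem_coe.2 (Finset.mem_erase.2 ⟨?_, ?_⟩)
      · intro hcontra
        have c1 : sw i p.1 = i := congrArg Prod.fst hcontra
        have c2 : sw i p.2 = i+1 := congrArg Prod.snd hcontra
        unfold sw at c1 c2
        split_ifs at c1 c2 <;> omega
      · simp only [hS, Finset.mem_filter, Finset.mem_product, Finset.mem_range]
        refine ⟨⟨sw_lt h hp1, sw_lt h hp2⟩, ?_, ?_⟩
        · unfold sw; split_ifs <;> omega
        · exact hinv
    · intro p hp q hq hpq
      simp only [Prod.mk.injEq] at hpq
      have e1 := congrArg (sw i) hpq.1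
      have e2 := congrArg (sw i) hpq.2
      rw [sw_invol, sw_invol] at e1
      rw [sw_invol, sw_invol] at e2
      exact Prod.ext e1 e2
  have hlt : (S.erase (i, i+1)).card < S.card := by
    rw [Finset.card_erase_of_mem hmem]
    have : 0 < S.card := Finset.card_pos.2 ⟨_, hmem⟩
    omega
  have hg : invN N g = S.card := rfl
  have hg2 : invN N (swapf i g) = S2.card := rfl
  omega

lemma sum_sw_reindex {N i : ℕ} (h : i + 1 < N) (G : ℕ → ℝ) :
    ∑ t ∈ Finset.range N, G (sw i t) = ∑ t ∈ Finset.range N, G t := by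
  apply Finset.sum_nbij' (fun t => sw i t) (fun t => sw i t)
  · intro a ha; simp only [Finset.mem_range] at *; exact sw_lt h ha
  · intro a ha; simp only [Finset.mem_range] at *; exact sw_lt h ha
  · intro a _; exact sw_invol i a
  · intro a _; exact sw_invol i a
  · intro a _; rfl

/-- decomposition of `range N` around positions `i`, `i+1` -/
lemma range_decomp {N i : ℕ} (h : i + 1 < N) :
    List.range N = List.range i ++ i :: (i+1) :: List.range' (i+2) (N-(i+2)) := by
  rw [List.range_eq_range', List.range_eq_range']
  have e1 : List.range' 0 i ++ List.range' (0 + 1 * i) (N - i) = List.range' 0 (N - i + i) :=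
    by rw [List.range'_append]; congr 1; omega
  have e2 : N - i + i = N := by omega
  rw [e2] at e1
  have e3 : (0 + 1 * i) = i := by omega
  rw [e3] at e1
  rw [← e1]
  congr 1
  have e4 : N - i = (N - (i+2)) + 1 + 1 := by omega
  rw [e4, List.range'_succ, List.range'_succ]

lemma map_swapf_perm {N i : ℕ} (h : i + 1 < N) (g : ℕ → ℝ) :
    ((List.range N).map (swapf i g)).Perm ((List.range N).map g) := by
  rw [range_decomp h]
  simp only [List.map_append, List.map_cons]
  have h1 : (List.range i).map (swapf i g) = (List.range i).map g := by
    apply List.map_congr_left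
    intro a ha
    rw [List.mem_range] at ha
    exact swapf_of_ne (by omega) (by omega)
  have h2 : (List.range' (i+2) (N-(i+2))).map (swapf i g)
      = (List.range' (i+2) (N-(i+2))).map g := by
    apply List.map_congr_left
    intro a ha
    rw [List.mem_range'] at ha
    obtain ⟨j, _, rfl⟩ := ha
    exact swapf_of_ne (by omega) (by omega)
  rw [h1, h2, swapf_at1, swapf_at2]
  exact List.Perm.append_left _ (List.Perm.swap _ _ _)

lemma mono_of_adj {N : ℕ} {g : ℕ → ℝ} (h : ∀ t, t+1 < N → g t ≤ g (t+1)) :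
    ∀ ⦃i j⦄, i ≤ j → j < N → g i ≤ g j := by
  intro i j hij
  induction hij with
  | refl => intro _; exact le_rfl
  | @step m hm ih =>
      intro hj
      exact le_trans (ih (by omega)) (h m (by omega))

lemma sorted_map_range {N : ℕ} {g : ℕ → ℝ} (h : ∀ ⦃i j⦄, i ≤ j → j < N → g i ≤ g j) :
    List.Pairwise (· ≤ ·) ((List.range N).map g) := by
  rw [List.pairwise_iff_getElem]
  intro a b ha hb hab
  simp only [List.length_map, List.length_range] at ha hb
  simp only [List.getElem_map, List.getElem_range]
  exact h hab.le hb

lemma mono_unique {N : ℕ} {g h : ℕ → ℝ}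
    (mg : ∀ ⦃i j⦄, i ≤ j → j < N → g i ≤ g j)
    (mh : ∀ ⦃i j⦄, i ≤ j → j < N → h i ≤ h j)
    (hperm : ((List.range N).map g).Perm ((List.range N).map h)) :
    ∀ t, t < N → g t = h t := by
  have heq : (List.range N).map g = (List.range N).map h :=
    List.Perm.eq_of_pairwise' (sorted_map_range mg) (sorted_map_range mh) hperm
  intro t ht
  have h1 : ((List.range N).map g)[t]'(by simp [ht]) = g t := by
    simp only [List.getElem_map, List.getElem_range]
  have h2 : ((List.range N).map h)[t]'(by simp [ht]) = h t := by
    simp only [List.getElem_map, List.getElem_range]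
  rw [← h1, ← h2]
  congr 1


lemma core (hineq : ∀ a b c d : ℝ, a ≤ b → b ≤ c → c ≤ d → d ≤ a + 2*Real.pi →
      f a d + f b c ≤ f a c + f b d)
    (N : ℕ) (w R : ℕ → ℝ) :
    ∀ (K : ℕ) (l r : ℕ → ℝ),
      (∀ t, t < N → l t ≤ r t ∧ r t ≤ l t + 2*Real.pi) →
      ((List.range N).map l).Perm ((List.range N).map w) →
      ((List.range N).map r).Perm ((List.range N).map R) →
      (∀ ⦃i j⦄, i ≤ j → j < N → w i ≤ w j) →
      (∀ ⦃i j⦄, i ≤ j → j < N → R i ≤ R j) →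
      (N*N+1) * invN N l + invN N r ≤ K →
      ∑ t ∈ Finset.range N, f (l t) (r t) ≤ ∑ t ∈ Finset.range N, f (w t) (R t) := by
  intro K
  induction K with
  | zero =>
      intro l r hval hpl hpr mw mR hK
      -- inversions are zero, so l and r are monotone, hence equal to w, R
      have hK0 : (N*N+1) * invN N l + invN N r = 0 := Nat.le_zero.mp hK
      have h1 : (N*N+1) * invN N l = 0 := by omega
      have hinvr : invN N r = 0 := by omega
      have hinvl : invN N l = 0 := by
        rcases Nat.mul_eq_zero.mp h1 with h | h
        · omega
        · exact h
      have hladj : ∀ t, t+1 < N → l t ≤ l (t+1) := by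
        intro t ht
        by_contra hcon
        push_neg at hcon
        have := invN_pos ht hcon
        omega
      have hradj : ∀ t, t+1 < N → r t ≤ r (t+1) := by
        intro t ht
        by_contra hcon
        push_neg at hcon
        have := invN_pos ht hcon
        omega
      have hlw := mono_unique (mono_of_adj hladj) mw hpl
      have hrR := mono_unique (mono_of_adj hradj) mR hpr
      apply le_of_eq
      refine Finset.sum_congr rfl fun t ht => ?_
      rw [Finset.mem_range] at ht
      rw [hlw t ht, hrR t ht]
  | succ K ih =>
      intro l r hval hpl hpr mw mR hK
      by_cases hl : ∃ t, t+1 < N ∧ l (t+1) < l t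
      · obtain ⟨t, ht, hlt⟩ := hl
        set l₂ := swapf t l with hl2
        set r₂ := swapf t r with hr2
        have hsum : ∑ s ∈ Finset.range N, f (l₂ s) (r₂ s)
            = ∑ s ∈ Finset.range N, f (l s) (r s) := by
          exact sum_sw_reindex ht (fun s => f (l s) (r s))
        have hval2 : ∀ s, s < N → l₂ s ≤ r₂ s ∧ r₂ s ≤ l₂ s + 2*Real.pi := by
          intro s hs
          unfold l₂ r₂
          unfold swapf
          exact hval (sw t s) (sw_lt ht hs)
        have hinv2 : invN N l₂ < invN N l := invN_swap_lt ht hlt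
        have hinvl : 1 ≤ invN N l := invN_pos ht hlt
        have hbound : (N*N+1) * invN N l₂ + invN N r₂ ≤ K := by
          have h1 : invN N r₂ ≤ N*N := invN_le N r₂
          have h2 : invN N l₂ ≤ invN N l - 1 := by omega
          calc (N*N+1) * invN N l₂ + invN N r₂ ≤ (N*N+1) * (invN N l - 1) + N*N := by
                have := Nat.mul_le_mul_left (N*N+1) h2
                omega
          _ ≤ K := by
                have hm : (N*N+1) * invN N l = (N*N+1) * (invN N l - 1) + (N*N+1) := by
                  have e : invN N l = (invN N l - 1) + 1 := by omega
                  conv_lhs => rw [e]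
                  ring
                omega
        rw [← hsum]
        exact ih l₂ r₂ hval2 ((map_swapf_perm ht l).trans hpl)
          ((map_swapf_perm ht r).trans hpr) mw mR hbound
      · push_neg at hl
        by_cases hr : ∃ t, t+1 < N ∧ r (t+1) < r t
        · obtain ⟨t, ht, hrt⟩ := hr
          set r₂ := swapf t r with hr2
          have hval2 : ∀ s, s < N → l s ≤ r₂ s ∧ r₂ s ≤ l s + 2*Real.pi := by
            intro s hs
            rcases eq_or_ne s t with rfl | h1
            · rw [hr2, swapf_at1]
              constructor
              · exact le_trans (hl s ht) (hval (s+1) ht).1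
              · exact le_trans (hrt.le) (hval s (by omega)).2
            · rcases eq_or_ne s (t+1) with rfl | h2
              · rw [hr2, swapf_at2]
                constructor
                · exact le_trans (hval (t+1) (by omega)).1 hrt.le
                · calc r t ≤ l t + 2*Real.pi := (hval t (by omega)).2
                  _ ≤ l (t+1) + 2*Real.pi := by
                      have := hl t ht
                      linarith
              · rw [hr2, swapf_of_ne h1 h2]
                exact hval s hs
          have hsum : ∑ s ∈ Finset.range N, f (l s) (r s)
              ≤ ∑ s ∈ Finset.range N, f (l s) (r₂ s) := by
            have hmt : t ∈ Finset.range N := by simp; omega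
            have hmt1 : t+1 ∈ (Finset.range N).erase t := by
              simp only [Finset.mem_erase, Finset.mem_range]
              exact ⟨by omega, by omega⟩
            have split1 : ∀ (G : ℕ → ℝ), ∑ s ∈ Finset.range N, G s
                = (∑ s ∈ ((Finset.range N).erase t).erase (t+1), G s) + G (t+1) + G t := by
              intro G
              rw [Finset.sum_erase_add _ _ hmt1, Finset.sum_erase_add _ _ hmt]
            rw [split1 (fun s => f (l s) (r s)), split1 (fun s => f (l s) (r₂ s))]
            have hbase : ∑ s ∈ ((Finset.range N).erase t).erase (t+1), f (l s) (r₂ s)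
                = ∑ s ∈ ((Finset.range N).erase t).erase (t+1), f (l s) (r s) := by
              refine Finset.sum_congr rfl fun s hs => ?_
              simp only [Finset.mem_erase] at hs
              rw [hr2, swapf_of_ne hs.2.1 hs.1]
            rw [hbase]
            have hmain : f (l t) (r t) + f (l (t+1)) (r (t+1))
                ≤ f (l t) (r₂ t) + f (l (t+1)) (r₂ (t+1)) := by
              rw [hr2, swapf_at1, swapf_at2]
              have := hineq (l t) (l (t+1)) (r (t+1)) (r t)
                (hl t ht) (hval (t+1) ht).1 hrt.le (hval t (by omega)).2
              linarith
            linarith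
          have hinv2 : invN N r₂ < invN N r := invN_swap_lt ht hrt
          have hbound : (N*N+1) * invN N l + invN N r₂ ≤ K := by omega
          exact le_trans hsum (ih l r₂ hval2 hpl ((map_swapf_perm ht r).trans hpr) mw mR hbound)
        · push_neg at hr
          have hlw := mono_unique (mono_of_adj hl) mw hpl
          have hrR := mono_unique (mono_of_adj hr) mR hpr
          apply le_of_eq
          refine Finset.sum_congr rfl fun t ht => ?_
          rw [Finset.mem_range] at ht
          rw [hlw t ht, hrR t ht]


lemma win_uniq {c a b : ℝ} (ha1 : c ≤ a) (ha2 : a < c + 2*Real.pi)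
    (hb1 : c ≤ b) (hb2 : b < c + 2*Real.pi) (z : ℤ) (hz : a = b + 2*Real.pi * z) :
    a = b := by
  have pi2 : (0:ℝ) < 2*Real.pi := by positivity
  have h1 : 2*Real.pi * z < 2*Real.pi * 1 := by
    rw [mul_one]; linarith
  have h2 : 2*Real.pi * (-1 : ℝ) < 2*Real.pi * z := by linarith
  have hz1 : (z:ℝ) < 1 := lt_of_mul_lt_mul_left h1 pi2.le
  have hz2 : (-1:ℝ) < (z:ℝ) := lt_of_mul_lt_mul_left h2 pi2.le
  have hz0 : z = 0 := by
    have b1 : z < 1 := by exact_mod_cast hz1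
    have b2 : (-1 : ℤ) < z := by exact_mod_cast hz2
    omega
  rw [hz0] at hz
  simpa using hz

lemma select (hper : ∀ a b : ℝ, f (a + 2*Real.pi) (b + 2*Real.pi) = f a b)
    {p q : ℕ} (hp : 1 ≤ p) (hq : 1 ≤ q)
    {u v : ℕ → ℝ} (hu : TN p u) (hv : TN q v) :
    ∃ u' v', TN p u' ∧ TN q v' ∧ TS f p u' = TS f p u ∧ TS f q v' = TS f q v ∧
      u' 0 ≤ v' 0 ∧ v' 0 ≤ u' 1 ∧ v' (q-1) ≤ u' 0 + 2*Real.pi := by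
  classical
  have pi2 : (0:ℝ) < 2*Real.pi := by positivity
  set rep : ℕ → ℝ := fun j => u 0 + 2*Real.pi * Int.fract ((v j - u 0)/(2*Real.pi)) with hrep
  have rep_lb : ∀ j, u 0 ≤ rep j := by
    intro j
    have h0 := Int.fract_nonneg ((v j - u 0)/(2*Real.pi))
    have : 0 ≤ 2*Real.pi * Int.fract ((v j - u 0)/(2*Real.pi)) := by positivity
    simp only [hrep]; linarith
  have rep_ub : ∀ j, rep j < u 0 + 2*Real.pi := by
    intro j
    have hf := Int.fract_lt_one ((v j - u 0)/(2*Real.pi))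
    have : 2*Real.pi * Int.fract ((v j - u 0)/(2*Real.pi)) < 2*Real.pi * 1 :=
      (mul_lt_mul_iff_right₀ pi2).mpr hf
    simp only [hrep]; linarith
  have rep_diff : ∀ j, ∃ z : ℤ, rep j = v j + 2*Real.pi * z := by
    intro j
    refine ⟨-⌊(v j - u 0)/(2*Real.pi)⌋, ?_⟩
    have hfr : Int.fract ((v j - u 0)/(2*Real.pi))
        = (v j - u 0)/(2*Real.pi) - ⌊(v j - u 0)/(2*Real.pi)⌋ :=
      (Int.self_sub_floor _).symm
    have h2 : 2*Real.pi * ((v j - u 0)/(2*Real.pi)) = v j - u 0 := by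
      field_simp
    simp only [hrep]
    rw [hfr, mul_sub, h2]
    push_cast
    ring
  -- the index of the u-point just below rep j
  have Kne : ∀ j, ((Finset.range p).filter (fun i => u i ≤ rep j)).Nonempty := by
    intro j
    exact ⟨0, by simp only [Finset.mem_filter, Finset.mem_range]; exact ⟨hp, rep_lb j⟩⟩
  set iofj : ℕ → ℕ := fun j => ((Finset.range p).filter (fun i => u i ≤ rep j)).max' (Kne j)
    with hiofj
  have iofj_lt : ∀ j, iofj j < p := by
    intro j
    have := Finset.max'_mem _ (Kne j)
    simp only [Finset.mem_filter, Finset.mem_range] at this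
    exact this.1
  have iofj_le : ∀ j, u (iofj j) ≤ rep j := by
    intro j
    have := Finset.max'_mem _ (Kne j)
    simp only [Finset.mem_filter, Finset.mem_range] at this
    exact this.2
  have iofj_max : ∀ j i, i < p → u i ≤ rep j → i ≤ iofj j := by
    intro j i hip hle
    exact Finset.le_max' _ i (by simp only [Finset.mem_filter, Finset.mem_range]; exact ⟨hip, hle⟩)
  have rep_lt_next : ∀ j, rep j < u (iofj j + 1) := by
    intro j
    by_cases hcase : iofj j + 1 < p
    · by_contra hcon
      push_neg at hcon
      have := iofj_max j (iofj j + 1) hcase hcon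
      omega
    · have he : iofj j + 1 = p := by have := iofj_lt j; omega
      rw [he, hu.2]
      exact rep_ub j
  set gap : ℕ → ℝ := fun j => rep j - u (iofj j) with hgap
  obtain ⟨js, hjs, hmin⟩ := Finset.exists_min_image (Finset.range q) gap ⟨0, by simp; omega⟩
  rw [Finset.mem_range] at hjs
  set k := iofj js with hk
  have hkp : k < p := iofj_lt js
  set u' := rotN p k u with hu'
  have hu'T : TN p u' := rotN_tiling hkp.le hu
  have hu'S : TS f p u' = TS f p u := rotN_sum hper hkp.le hu
  have hu'0 : u' 0 = u k := by rw [hu', rotN_apply_le (by omega), Nat.add_zero]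
  have hu'1 : u' 1 = u (k+1) := by rw [hu', rotN_apply_le (by omega)]
  obtain ⟨zs, hzs⟩ := rep_diff js
  set v'' : ℕ → ℝ := fun t => rotN q js v t + 2*Real.pi * zs with hv''
  have hv''T : TN q v'' := shift_tiling _ (rotN_tiling hjs.le hv)
  have hv''S : TS f q v'' = TS f q v := by
    rw [hv'']
    rw [shift_sum hper zs]
    exact rotN_sum hper hjs.le hv
  have hv''0 : v'' 0 = rep js := by
    rw [hv'']
    simp only
    rw [rotN_apply_le (by omega)]
    rw [Nat.add_zero, ← hzs]
  -- the key contradiction lemma from minimality of the gap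
  have VIO : ∀ (x : ℝ) (j' : ℕ), j' < q → (∃ z : ℤ, x = v j' + 2*Real.pi * z) →
      u k + 2*Real.pi < x → x < rep js + 2*Real.pi → False := by
    intro x j' hj' ⟨z, hzx⟩ hlow hhigh
    obtain ⟨z', hz'⟩ := rep_diff j'
    set y := x - 2*Real.pi with hy
    have hyform : y = rep j' + 2*Real.pi * ((z - 1 - z' : ℤ) : ℝ) := by
      rw [hy, hzx, hz']
      push_cast
      ring
    have hylb : u 0 ≤ y := by
      have : u 0 ≤ u k := hu.1 (Nat.zero_le k) hkp.le
      rw [hy]; linarith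
    have hyub : y < u 0 + 2*Real.pi := by
      have := rep_ub js
      rw [hy]; linarith
    have hyeq : y = rep j' :=
      win_uniq hylb hyub (rep_lb j') (rep_ub j') _ hyform
    have hky : u k < y := by rw [hy]; linarith
    have hk_le : k ≤ iofj j' := iofj_max j' k hkp (by rw [← hyeq]; exact hky.le)
    have hi_le : iofj j' ≤ k := by
      by_contra hcon
      push_neg at hcon
      have h1 : u (k+1) ≤ u (iofj j') := hu.1 hcon (iofj_lt j').le
      have h2 : u (iofj j') ≤ rep j' := iofj_le j'
      have h3 : rep j' = y := hyeq.symm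
      have h4 : y < rep js := by rw [hy]; linarith
      have h5 := rep_lt_next js
      rw [← hk] at h5
      linarith
    have hieq : iofj j' = k := le_antisymm hi_le hk_le
    have hgaplt : gap j' < gap js := by
      rw [hgap]
      simp only [hieq, ← hk]
      rw [← hyeq]
      have : y < rep js := by rw [hy]; linarith
      linarith
    have := hmin j' (Finset.mem_range.mpr hj')
    linarith
  -- a form lemma: all values of v'' at indices ≤ q are v-points up to 2π multiples
  have vform : ∀ t, t ≤ q → ∃ j' < q, ∃ z : ℤ, v'' t = v j' + 2*Real.pi * z := by
    intro t htq
    rw [hv'']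
    simp only
    by_cases hb : js + t ≤ q
    · rw [rotN_apply_le hb]
      rcases eq_or_lt_of_le hb with heq | hlt2
      · refine ⟨0, by omega, zs + 1, ?_⟩
        rw [heq, hv.2]
        push_cast
        ring
      · exact ⟨js + t, by omega, zs, rfl⟩
    · rw [rotN_apply_ge hv (by omega)]
      refine ⟨js + t - q, by omega, zs + 1, ?_⟩
      push_cast
      ring
  by_cases hC3 : v'' (q-1) ≤ u k + 2*Real.pi
  · refine ⟨u', v'', hu'T, hv''T, hu'S, hv''S, ?_, ?_, ?_⟩
    · rw [hu'0, hv''0]; exact iofj_le js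
    · rw [hu'1, hv''0]; exact (rep_lt_next js).le
    · rw [hu'0]; exact hC3
  · push_neg at hC3
    -- v'' (q-1) must equal rep js + 2π
    have hle : v'' (q-1) ≤ rep js + 2*Real.pi := by
      have h1 : v'' (q-1) ≤ v'' q := hv''T.1 (by omega) le_rfl
      rw [hv''T.2, hv''0] at h1
      exact h1
    have heqtop : v'' (q-1) = rep js + 2*Real.pi := by
      rcases eq_or_lt_of_le hle with h | h
      · exact h
      · obtain ⟨j', hj', z, hz⟩ := vform (q-1) (by omega)
        exact absurd (VIO _ j' hj' ⟨z, hz⟩ hC3 h) (by simp)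
    have hq2 : 2 ≤ q := by
      by_contra hcon
      have hq1 : q = 1 := by omega
      rw [hq1] at heqtop
      simp at heqtop
      rw [hv''0] at heqtop
      linarith
    set T := (Finset.Ico 1 q).filter (fun t => v'' t = rep js + 2*Real.pi) with hT
    have hTne : T.Nonempty := by
      refine ⟨q-1, ?_⟩
      simp only [hT, Finset.mem_filter, Finset.mem_Ico]
      exact ⟨⟨by omega, by omega⟩, heqtop⟩
    set t0 := T.min' hTne with ht0
    have ht0mem := Finset.min'_mem T hTne
    simp only [hT, Finset.mem_filter, Finset.mem_Ico] at ht0mem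
    have ht01 : 1 ≤ t0 := ht0mem.1.1
    have ht0q : t0 < q := ht0mem.1.2
    have ht0val : v'' t0 = rep js + 2*Real.pi := ht0mem.2
    have ht0min : ∀ t, 1 ≤ t → t < q → v'' t = rep js + 2*Real.pi → t0 ≤ t := by
      intro t h1 h2 h3
      exact Finset.min'_le T t (by simp only [hT, Finset.mem_filter, Finset.mem_Ico]; exact ⟨⟨h1, h2⟩, h3⟩)
    set v' : ℕ → ℝ := fun t => rotN q t0 v'' t + 2*Real.pi * ((-1 : ℤ) : ℝ) with hv'
    have hv'T : TN q v' := shift_tiling _ (rotN_tiling ht0q.le hv''T)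
    have hv'S : TS f q v' = TS f q v := by
      rw [hv']
      rw [shift_sum hper (-1 : ℤ)]
      rw [rotN_sum hper ht0q.le hv''T]
      exact hv''S
    have hv'0 : v' 0 = rep js := by
      rw [hv']
      simp only
      rw [rotN_apply_le (by omega), Nat.add_zero, ht0val]
      push_cast
      ring
    have hv'last : v' (q-1) = v'' (t0 - 1) := by
      rw [hv']
      simp only
      rw [rotN_apply_ge hv''T (by omega)]
      have e : t0 + (q-1) - q = t0 - 1 := by omega
      rw [e]
      push_cast
      ring
    refine ⟨u', v', hu'T, hv'T, hu'S, hv'S, ?_, ?_, ?_⟩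
    · rw [hu'0, hv'0]; exact iofj_le js
    · rw [hu'1, hv'0]; exact (rep_lt_next js).le
    · rw [hu'0, hv'last]
      by_contra hcon
      push_neg at hcon
      have hstrict : v'' (t0 - 1) < rep js + 2*Real.pi := by
        have hle2 : v'' (t0-1) ≤ v'' t0 := hv''T.1 (by omega) ht0q.le
        rcases eq_or_lt_of_le (hle2.trans_eq ht0val) with h | h
        · rcases eq_or_lt_of_le ht01 with h1 | h1
          · rw [← h1] at h
            simp at h
            rw [hv''0] at h
            linarith
          · have := ht0min (t0-1) (by omega) (by omega) h
            omega
        · exact h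
      obtain ⟨j', hj', z, hz⟩ := vform (t0-1) (by omega)
      exact VIO _ j' hj' ⟨z, hz⟩ hcon hstrict


lemma map_getD_self (L : List ℝ) :
    (List.range L.length).map (fun t => L.getD t 0) = L := by
  apply List.ext_getElem
  · simp
  · intro i h1 h2
    simp only [List.getElem_map, List.getElem_range]
    rw [List.getD_eq_getElem L 0 h2]

lemma sorted_getD_mono {L : List ℝ} (hL : List.Pairwise (· ≤ ·) L)
    {i j : ℕ} (hij : i ≤ j) (hj : j < L.length) :
    L.getD i 0 ≤ L.getD j 0 := by
  rcases eq_or_lt_of_le hij with rfl | hlt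
  · exact le_rfl
  · rw [List.getD_eq_getElem L 0 (by omega), List.getD_eq_getElem L 0 hj]
    rw [List.pairwise_iff_getElem] at hL
    exact hL i j (by omega) hj hlt

lemma sum_even_odd (G : ℕ → ℝ) (n : ℕ) :
    ∑ t ∈ Finset.range (2*n), G t
      = (∑ i ∈ Finset.range n, G (2*i)) + ∑ i ∈ Finset.range n, G (2*i+1) := by
  induction n with
  | zero => simp
  | succ n ih =>
      have e : 2*(n+1) = (2*n+1)+1 := by omega
      rw [e, Finset.sum_range_succ, Finset.sum_range_succ,
        Finset.sum_range_succ (fun i => G (2*i)), Finset.sum_range_succ (fun i => G (2*i+1)), ih]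
      ring


lemma mseq_bdd (hbdd : ∃ B : ℝ, ∀ a b : ℝ, a ≤ b → b ≤ a + 2 * Real.pi → |f a b| ≤ B) (n : ℕ) :
    BddAbove {s | ∃ x : Fin (n + 1) → ℝ, Monotone x ∧ x (Fin.last n) = x 0 + 2 * Real.pi ∧
      s = ∑ i : Fin n, f (x i.castSucc) (x i.succ)} := by
  obtain ⟨B, hB⟩ := hbdd
  refine ⟨n * B, ?_⟩
  rintro s ⟨x, hmono, hclose, rfl⟩
  have hterm : ∀ i : Fin n, f (x i.castSucc) (x i.succ) ≤ B := by
    intro i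
    have h1 : x i.castSucc ≤ x i.succ := hmono (Fin.castSucc_le_succ i)
    have h2 : x i.succ ≤ x i.castSucc + 2*Real.pi := by
      have ha : x i.succ ≤ x (Fin.last n) := hmono (Fin.le_last _)
      have hb : x 0 ≤ x i.castSucc := hmono (Fin.zero_le _)
      rw [hclose] at ha
      linarith
    have := hB _ _ h1 h2
    exact (abs_le.mp this).2
  calc ∑ i : Fin n, f (x i.castSucc) (x i.succ) ≤ ∑ _i : Fin n, B :=
        Finset.sum_le_sum (fun i _ => hterm i)
  _ = n * B := by rw [Finset.sum_const, Finset.card_univ, Fintype.card_fin, nsmul_eq_mul]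

lemma key (hbdd : ∃ B : ℝ, ∀ a b : ℝ, a ≤ b → b ≤ a + 2 * Real.pi → |f a b| ≤ B)
    (hper : ∀ a b : ℝ, f (a + 2*Real.pi) (b + 2*Real.pi) = f a b)
    (hineq : ∀ a b c d : ℝ, a ≤ b → b ≤ c → c ≤ d → d ≤ a + 2*Real.pi →
      f a d + f b c ≤ f a c + f b d)
    {N p q : ℕ} (hp : 1 ≤ p) (hq : 1 ≤ q) (hpq : p + q = 2*N)
    {u0 v0 : ℕ → ℝ} (hu0 : TN p u0) (hv0 : TN q v0) :
    TS f p u0 + TS f q v0 ≤ 2 * Mseq f N := by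
  classical
  have pi2 : (0:ℝ) < 2*Real.pi := by positivity
  have hN : 1 ≤ N := by omega
  obtain ⟨u', v', hu', hv', hSu, hSv, C1, C2, C3⟩ := select hper hp hq hu0 hv0
  rw [← hSu, ← hSv]
  obtain ⟨pm, rfl⟩ : ∃ pm, p = pm + 1 := ⟨p - 1, by omega⟩
  obtain ⟨qm, rfl⟩ : ∃ qm, q = qm + 1 := ⟨q - 1, by omega⟩
  have hC3 : v' qm ≤ u' 0 + 2*Real.pi := by simpa using C3
  set M := (pm + 1) + (qm + 1) with hM
  have hM2 : M = 2*N := by omega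
  have hMQ : pm + qm = 2*N - 2 := by omega
  -- left and right endpoints of all 2N arcs
  set l : ℕ → ℝ := fun t => if t < pm + 1 then u' t else v' (t - (pm+1)) with hldef
  set r : ℕ → ℝ := fun t => if t < pm + 1 then u' (t+1) else v' (t - (pm+1) + 1) with hrdef
  have hsum_lr : ∑ t ∈ Finset.range M, f (l t) (r t) = TS f (pm+1) u' + TS f (qm+1) v' := by
    rw [hM, Finset.sum_range_add]
    congr 1
    · refine Finset.sum_congr rfl fun t ht => ?_
      rw [Finset.mem_range] at ht
      rw [hldef, hrdef]
      simp only [if_pos ht]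
    · refine Finset.sum_congr rfl fun t ht => ?_
      rw [Finset.mem_range] at ht
      rw [hldef, hrdef]
      simp only [if_neg (by omega : ¬ (pm + 1 + t < pm + 1))]
      have e : pm + 1 + t - (pm + 1) = t := by omega
      rw [e]
  -- the sorted merge
  set Lsort : List ℝ := Multiset.sort (((List.range M).map l : List ℝ) : Multiset ℝ) (· ≤ ·)
    with hLsort
  have hLperm : Lsort.Perm ((List.range M).map l) := by
    rw [← Multiset.coe_eq_coe]
    exact Multiset.sort_eq _ _
  have hLsorted : List.Pairwise (· ≤ ·) Lsort := Multiset.pairwise_sort _ _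
  have hlenM : Lsort.length = M := by
    rw [hLsort]
    rw [Multiset.length_sort]
    simp
  set Tu : List ℝ := (List.range pm).map (fun t => u' (t+1)) with hTu
  set Tv : List ℝ := (List.range qm).map (fun t => v' (t+1)) with hTv
  have list_l : (List.range M).map l = (u' 0 :: Tu) ++ (v' 0 :: Tv) := by
    rw [hM, List.range_add, List.map_append, List.map_map]
    congr 1
    · have e1 : (List.range (pm+1)).map l = (List.range (pm+1)).map u' := by
        apply List.map_congr_left
        intro t ht
        rw [List.mem_range] at ht
        rw [hldef]; simp only [if_pos ht]
      rw [e1, List.range_succ_eq_map, List.map_cons, List.map_map]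
      rfl
    · have e2 : (List.range (qm+1)).map (l ∘ (fun x => (pm+1) + x))
          = (List.range (qm+1)).map v' := by
        apply List.map_congr_left
        intro t ht
        rw [List.mem_range] at ht
        simp only [Function.comp_apply, hldef]
        rw [if_neg (by omega)]
        congr 1
        omega
      rw [e2, List.range_succ_eq_map, List.map_cons, List.map_map]
      rfl
  have list_r : (List.range M).map r
      = (Tu ++ [u' 0 + 2*Real.pi]) ++ (Tv ++ [v' 0 + 2*Real.pi]) := by
    rw [hM, List.range_add, List.map_append, List.map_map]
    congr 1
    · have e1 : (List.range (pm+1)).map r = (List.range (pm+1)).map (fun t => u' (t+1)) := by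
        apply List.map_congr_left
        intro t ht
        rw [List.mem_range] at ht
        rw [hrdef]; simp only [if_pos ht]
      rw [e1, List.range_succ, List.map_append, List.map_singleton]
      congr 1
      rw [hu'.2]
    · have e2 : (List.range (qm+1)).map (r ∘ (fun x => (pm+1) + x))
          = (List.range (qm+1)).map (fun t => v' (t+1)) := by
        apply List.map_congr_left
        intro t ht
        rw [List.mem_range] at ht
        simp only [Function.comp_apply, hrdef]
        rw [if_neg (by omega)]
        congr 1
        omega
      rw [e2, List.range_succ, List.map_append, List.map_singleton]
      congr 1
      rw [hv'.2]
  -- min/max facts about the elements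
  have hmin_all : ∀ x ∈ (List.range M).map l, u' 0 ≤ x := by
    rw [list_l]
    intro x hx
    simp only [List.mem_append, List.mem_cons, hTu, hTv, List.mem_map, List.mem_range] at hx
    rcases hx with (rfl | ⟨t, ht, rfl⟩) | (rfl | ⟨t, ht, rfl⟩)
    · exact le_rfl
    · exact hu'.1 (Nat.zero_le _) (by omega)
    · exact C1
    · exact le_trans C1 (hv'.1 (Nat.zero_le _) (by omega))
  have hmax_all : ∀ x ∈ (List.range M).map l, x ≤ u' 0 + 2*Real.pi := by
    rw [list_l]
    intro x hx
    simp only [List.mem_append, List.mem_cons, hTu, hTv, List.mem_map, List.mem_range] at hx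
    rcases hx with (rfl | ⟨t, ht, rfl⟩) | (rfl | ⟨t, ht, rfl⟩)
    · linarith
    · have h1 : u' (t+1) ≤ u' (pm+1) := hu'.1 (by omega) le_rfl
      rw [hu'.2] at h1
      exact h1
    · exact le_trans (hv'.1 (Nat.zero_le _) (by omega) : v' 0 ≤ v' qm) hC3
    · exact le_trans (hv'.1 (by omega) (by omega) : v' (t+1) ≤ v' qm) hC3
  have hmin2 : ∀ x ∈ Tu ++ Tv, v' 0 ≤ x := by
    intro x hx
    simp only [List.mem_append, hTu, hTv, List.mem_map, List.mem_range] at hx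
    rcases hx with ⟨t, ht, rfl⟩ | ⟨t, ht, rfl⟩
    · exact le_trans C2 (hu'.1 (by omega) (by omega))
    · exact hv'.1 (Nat.zero_le _) (by omega)
  -- peel off the two smallest elements of the sorted list
  obtain ⟨a, L1, hL1⟩ : ∃ a L1, Lsort = a :: L1 := by
    cases hLs : Lsort with
    | nil => rw [hLs] at hlenM; simp at hlenM
    | cons a L1 => exact ⟨a, L1, rfl⟩
  obtain ⟨b, L2, hL2⟩ : ∃ b L2, L1 = b :: L2 := by
    cases hLs : L1 with
    | nil => rw [hL1, hLs] at hlenM; simp at hlenM; omega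
    | cons b L2 => exact ⟨b, L2, rfl⟩
  rw [hL2] at hL1
  -- hL1 : Lsort = a :: b :: L2
  have ha : a = u' 0 := by
    have hmem_a : a ∈ (List.range M).map l := hLperm.subset (by rw [hL1]; exact List.mem_cons_self)
    have h1 : u' 0 ≤ a := hmin_all a hmem_a
    have hmem_u : u' 0 ∈ Lsort := by
      apply hLperm.symm.subset
      rw [list_l]
      exact List.mem_append_left _ (List.mem_cons_self)
    rw [hL1] at hmem_u
    rcases List.mem_cons.mp hmem_u with h | h
    · exact h.symm
    · have h2 : a ≤ u' 0 := by
        rw [hL1] at hLsorted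
        exact List.rel_of_pairwise_cons hLsorted h
      linarith
  have hperm1 : (b :: L2).Perm (Tu ++ (v' 0 :: Tv)) := by
    have h0 : Lsort.Perm (u' 0 :: (Tu ++ (v' 0 :: Tv))) := by
      rw [list_l, List.cons_append] at hLperm
      exact hLperm
    rw [hL1, ha] at h0
    exact h0.cons_inv
  have hperm2 : (b :: L2).Perm (v' 0 :: (Tu ++ Tv)) := hperm1.trans List.perm_middle
  have hb : b = v' 0 := by
    have h1 : v' 0 ≤ b := by
      have hmem_b : b ∈ v' 0 :: (Tu ++ Tv) := hperm2.subset (List.mem_cons_self)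
      rcases List.mem_cons.mp hmem_b with h | h
      · exact le_of_eq h.symm
      · exact hmin2 b h
    have h2 : b ≤ v' 0 := by
      have hmem_v : v' 0 ∈ b :: L2 := hperm2.symm.subset (List.mem_cons_self)
      rcases List.mem_cons.mp hmem_v with h | h
      · exact le_of_eq h.symm
      · have hs : List.Pairwise (· ≤ ·) (b :: L2) := by
          rw [hL1] at hLsorted; exact hLsorted.of_cons
        exact List.rel_of_pairwise_cons hs h
    linarith
  have hL2perm : L2.Perm (Tu ++ Tv) := by
    rw [hb] at hperm2
    exact hperm2.cons_inv
  set w : ℕ → ℝ := fun t => Lsort.getD t 0 with hwdef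
  have hw0 : w 0 = u' 0 := by
    simp only [hwdef]
    rw [hL1, List.getD_cons_zero, ha]
  have hw1 : w 1 = v' 0 := by
    simp only [hwdef]
    rw [hL1, show (1:ℕ) = 0 + 1 from rfl, List.getD_cons_succ, List.getD_cons_zero, hb]
  have hw2 : ∀ t, w (t+2) = L2.getD t 0 := by
    intro t
    simp only [hwdef]
    rw [hL1, show t+2 = (t+1)+1 from rfl, List.getD_cons_succ, List.getD_cons_succ]
  have hwmono : ∀ ⦃i j⦄, i ≤ j → j < M → w i ≤ w j := by
    intro i j hij hj
    exact sorted_getD_mono hLsorted hij (by rw [hlenM]; exact hj)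
  have hwmax : ∀ t, t < M → w t ≤ u' 0 + 2*Real.pi := by
    intro t ht
    have hmem : Lsort.getD t 0 ∈ Lsort := by
      rw [List.getD_eq_getElem _ _ (by rw [hlenM]; exact ht)]
      exact List.getElem_mem _
    exact hmax_all _ (hLperm.subset hmem)
  have hL2len : L2.length = pm + qm := by
    rw [hL1] at hlenM
    simp only [List.length_cons] at hlenM
    omega
  set R : ℕ → ℝ := fun t => if t < pm + qm then w (t+2)
      else if t = pm + qm then u' 0 + 2*Real.pi else v' 0 + 2*Real.pi with hRdef
  have hRmono : ∀ ⦃i j⦄, i ≤ j → j < M → R i ≤ R j := by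
    intro i j hij hj
    simp only [hRdef]
    by_cases hjq : j < pm + qm
    · rw [if_pos hjq, if_pos (lt_of_le_of_lt hij hjq)]
      exact hwmono (by omega) (by omega)
    · by_cases hje : j = pm + qm
      · rw [if_neg (show ¬ j < pm + qm by omega)]
        rw [if_pos hje]
        by_cases hiq : i < pm + qm
        · rw [if_pos hiq]
          exact hwmax (i+2) (by omega)
        · rw [if_neg hiq, if_pos (show i = pm + qm by omega)]
      · rw [if_neg (show ¬ j < pm + qm by omega), if_neg hje]
        by_cases hiq : i < pm + qm
        · rw [if_pos hiq]
          have := hwmax (i+2) (by omega)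
          linarith
        · by_cases hie : i = pm + qm
          · rw [if_neg hiq, if_pos hie]
            linarith
          · rw [if_neg hiq, if_neg hie]
  have list_R : (List.range M).map R = (L2 ++ [u' 0 + 2*Real.pi]) ++ [v' 0 + 2*Real.pi] := by
    have hMsplit : M = (pm+qm) + 1 + 1 := by omega
    have hR1 : R (pm+qm) = u' 0 + 2*Real.pi := by
      have h1 : ¬ pm + qm < pm + qm := by omega
      simp only [hRdef]
      simp [h1]
    have hR2 : R (pm+qm+1) = v' 0 + 2*Real.pi := by
      have h1 : ¬ pm + qm + 1 < pm + qm := by omega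
      have h2 : ¬ pm + qm + 1 = pm + qm := by omega
      simp only [hRdef]
      simp [h1, h2]
    have hRbase : (List.range (pm+qm)).map R = L2 := by
      have e1 : (List.range (pm+qm)).map R = (List.range (pm+qm)).map (fun t => L2.getD t 0) := by
        apply List.map_congr_left
        intro t ht
        rw [List.mem_range] at ht
        simp only [hRdef]
        rw [if_pos ht]
        exact hw2 t
      rw [e1, ← hL2len, map_getD_self]
    rw [hMsplit, List.range_succ, List.range_succ, List.map_append, List.map_append,
      List.map_singleton, List.map_singleton, hRbase, hR1, hR2]
  have hRperm : ((List.range M).map r).Perm ((List.range M).map R) := by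
    rw [list_r, list_R, ← Multiset.coe_eq_coe]
    simp only [← Multiset.coe_add]
    have hc : (L2 : Multiset ℝ) = (Tu : Multiset ℝ) + (Tv : Multiset ℝ) := by
      rw [Multiset.coe_add, Multiset.coe_eq_coe]
      exact hL2perm
    rw [hc]
    abel
  have hlperm2 : ((List.range M).map l).Perm ((List.range M).map w) := by
    have hmw : (List.range M).map w = Lsort := by
      simp only [hwdef]
      conv_lhs => rw [← hlenM]
      exact map_getD_self Lsort
    rw [hmw]
    exact hLperm.symm
  have hval : ∀ t, t < M → l t ≤ r t ∧ r t ≤ l t + 2*Real.pi := by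
    intro t ht
    simp only [hldef, hrdef]
    by_cases htp : t < pm + 1
    · simp only [if_pos htp]
      constructor
      · exact hu'.1 (by omega) (by omega)
      · have h1 : u' (t+1) ≤ u' (pm+1) := hu'.1 (by omega) le_rfl
        have h2 : u' 0 ≤ u' t := hu'.1 (Nat.zero_le _) (by omega)
        rw [hu'.2] at h1
        linarith
    · simp only [if_neg htp]
      constructor
      · exact hv'.1 (by omega) (by omega)
      · have h1 : v' (t - (pm+1) + 1) ≤ v' (qm+1) := hv'.1 (by omega) le_rfl
        have h2 : v' 0 ≤ v' (t - (pm+1)) := hv'.1 (Nat.zero_le _) (by omega)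
        rw [hv'.2] at h1
        linarith
  have hcore := core hineq M w R ((M*M+1) * invN M l + invN M r) l r hval hlperm2 hRperm
    hwmono hRmono le_rfl
  -- assemble the two tilings A (even positions) and B (odd positions)
  set A : Fin (N+1) → ℝ := fun i => if (i:ℕ) < N then w (2*(i:ℕ)) else u' 0 + 2*Real.pi with hA
  set B : Fin (N+1) → ℝ := fun i => if (i:ℕ) < N then w (2*(i:ℕ)+1) else v' 0 + 2*Real.pi with hB
  have hAmono : Monotone A := by
    intro i j hij
    have hij' : (i:ℕ) ≤ (j:ℕ) := hij
    simp only [hA]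
    by_cases hi : (i:ℕ) < N
    · by_cases hj : (j:ℕ) < N
      · rw [if_pos hi, if_pos hj]
        exact hwmono (by omega) (by omega)
      · rw [if_pos hi, if_neg hj]
        exact hwmax _ (by omega)
    · have hiN : (i:ℕ) = N := by have := i.isLt; omega
      have hjN : (j:ℕ) = N := by have := j.isLt; omega
      rw [if_neg hi, if_neg (by omega)]
  have hBmono : Monotone B := by
    intro i j hij
    have hij' : (i:ℕ) ≤ (j:ℕ) := hij
    simp only [hB]
    by_cases hi : (i:ℕ) < N
    · by_cases hj : (j:ℕ) < N
      · rw [if_pos hi, if_pos hj]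
        exact hwmono (by omega) (by omega)
      · rw [if_pos hi, if_neg hj]
        have := hwmax (2*(i:ℕ)+1) (by omega)
        linarith
    · have hjN : (j:ℕ) = N := by have := j.isLt; omega
      rw [if_neg hi, if_neg (by omega)]
  have hAclose : A (Fin.last N) = A 0 + 2*Real.pi := by
    simp only [hA, Fin.val_last, Fin.val_zero]
    rw [if_neg (lt_irrefl N)]; simp [show 0 < N by omega, hw0]
  have hBclose : B (Fin.last N) = B 0 + 2*Real.pi := by
    simp only [hB, Fin.val_last, Fin.val_zero]
    rw [if_neg (lt_irrefl N)]; simp [show 0 < N by omega, hw1]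
  have hSA : (∑ i : Fin N, f (A i.castSucc) (A i.succ))
      = ∑ t ∈ Finset.range N, f (w (2*t)) (R (2*t)) := by
    rw [← Fin.sum_univ_eq_sum_range (fun t => f (w (2*t)) (R (2*t))) N]
    refine Finset.sum_congr rfl fun i _ => ?_
    have hiN : (i:ℕ) < N := i.isLt
    have h1 : A i.castSucc = w (2*(i:ℕ)) := by
      simp only [hA, Fin.coe_castSucc]
      rw [if_pos hiN]
    have h2 : A i.succ = R (2*(i:ℕ)) := by
      simp only [hA, hRdef, Fin.val_succ]
      by_cases hi1 : (i:ℕ)+1 < N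
      · rw [if_pos hi1, if_pos (show 2*(i:ℕ) < pm+qm by omega)]
        congr 1
      · rw [if_neg hi1, if_neg (show ¬ 2*(i:ℕ) < pm+qm by omega),
          if_pos (show 2*(i:ℕ) = pm+qm by omega)]
    rw [h1, h2]
  have hSB : (∑ i : Fin N, f (B i.castSucc) (B i.succ))
      = ∑ t ∈ Finset.range N, f (w (2*t+1)) (R (2*t+1)) := by
    rw [← Fin.sum_univ_eq_sum_range (fun t => f (w (2*t+1)) (R (2*t+1))) N]
    refine Finset.sum_congr rfl fun i _ => ?_
    have hiN : (i:ℕ) < N := i.isLt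
    have h1 : B i.castSucc = w (2*(i:ℕ)+1) := by
      simp only [hB, Fin.coe_castSucc]
      rw [if_pos hiN]
    have h2 : B i.succ = R (2*(i:ℕ)+1) := by
      simp only [hB, hRdef, Fin.val_succ]
      by_cases hi1 : (i:ℕ)+1 < N
      · rw [if_pos hi1, if_pos (show 2*(i:ℕ)+1 < pm+qm by omega)]
        congr 1
      · rw [if_neg hi1, if_neg (show ¬ 2*(i:ℕ)+1 < pm+qm by omega),
          if_neg (show ¬ 2*(i:ℕ)+1 = pm+qm by omega)]
    rw [h1, h2]
  have hMseq : Mseq f N = sSup {s | ∃ x : Fin (N + 1) → ℝ, Monotone x ∧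
      x (Fin.last N) = x 0 + 2 * Real.pi ∧
      s = ∑ i : Fin N, f (x i.castSucc) (x i.succ)} := rfl
  have hAle : (∑ i : Fin N, f (A i.castSucc) (A i.succ)) ≤ Mseq f N := by
    rw [hMseq]
    exact le_csSup (mseq_bdd hbdd N) ⟨A, hAmono, hAclose, rfl⟩
  have hBle : (∑ i : Fin N, f (B i.castSucc) (B i.succ)) ≤ Mseq f N := by
    rw [hMseq]
    exact le_csSup (mseq_bdd hbdd N) ⟨B, hBmono, hBclose, rfl⟩
  calc TS f (pm+1) u' + TS f (qm+1) v'
      = ∑ t ∈ Finset.range M, f (l t) (r t) := hsum_lr.symm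
    _ ≤ ∑ t ∈ Finset.range M, f (w t) (R t) := hcore
    _ = (∑ t ∈ Finset.range N, f (w (2*t)) (R (2*t)))
        + ∑ t ∈ Finset.range N, f (w (2*t+1)) (R (2*t+1)) := by
          rw [show M = 2*N from hM2]
          exact sum_even_odd _ N
    _ ≤ Mseq f N + Mseq f N := by
          rw [← hSA, ← hSB]
          exact add_le_add hAle hBle
    _ = 2 * Mseq f N := by ring


lemma mem_to_TN {m : ℕ} {s : ℝ}
    (h : ∃ x : Fin (m + 1) → ℝ, Monotone x ∧ x (Fin.last m) = x 0 + 2 * Real.pi ∧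
      s = ∑ i : Fin m, f (x i.castSucc) (x i.succ)) :
    ∃ X : ℕ → ℝ, TN m X ∧ s = TS f m X := by
  obtain ⟨x, hmono, hcl, rfl⟩ := h
  refine ⟨fun t => x ⟨min t m, by omega⟩, ⟨?_, ?_⟩, ?_⟩
  · intro i j hij hj
    exact hmono (by simp only [Fin.mk_le_mk]; omega)
  · have e1 : (⟨min m m, by omega⟩ : Fin (m+1)) = Fin.last m := by
      apply Fin.ext
      simp [Fin.val_last]
    have e2 : (⟨min 0 m, by omega⟩ : Fin (m+1)) = 0 := by
      apply Fin.ext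
      simp
    simp only
    rw [e1, e2, hcl]
  · rw [TS, ← Fin.sum_univ_eq_sum_range
      (fun t => f (x ⟨min t m, by omega⟩) (x ⟨min (t+1) m, by omega⟩)) m]
    refine Finset.sum_congr rfl fun i _ => ?_
    have hiN : (i:ℕ) < m := i.isLt
    have e1 : (⟨min (i:ℕ) m, by omega⟩ : Fin (m+1)) = i.castSucc := by
      apply Fin.ext
      simp only [Fin.coe_castSucc]
      omega
    have e2 : (⟨min ((i:ℕ)+1) m, by omega⟩ : Fin (m+1)) = i.succ := by
      apply Fin.ext
      simp only [Fin.val_succ]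
      omega
    rw [e1, e2]

lemma mseq_nonempty (m : ℕ) (hm : 1 ≤ m) :
    ∃ s : ℝ, s ∈ {s | ∃ x : Fin (m + 1) → ℝ, Monotone x ∧
      x (Fin.last m) = x 0 + 2 * Real.pi ∧
      s = ∑ i : Fin m, f (x i.castSucc) (x i.succ)} := by
  have pi2 : (0:ℝ) ≤ 2*Real.pi := by positivity
  set x : Fin (m+1) → ℝ := fun i => if (i:ℕ) = 0 then 0 else 2*Real.pi with hx
  refine ⟨∑ i : Fin m, f (x i.castSucc) (x i.succ), x, ?_, ?_, rfl⟩
  · intro i j hij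
    have hij' : (i:ℕ) ≤ (j:ℕ) := hij
    simp only [hx]
    by_cases hi : (i:ℕ) = 0
    · by_cases hj : (j:ℕ) = 0
      · rw [if_pos hi, if_pos hj]
      · rw [if_pos hi, if_neg hj]
        exact pi2
    · have hj : (j:ℕ) ≠ 0 := by omega
      rw [if_neg hi, if_neg hj]
  · simp only [hx, Fin.val_last, Fin.val_zero]
    rw [if_neg (show ¬ (m:ℕ) = 0 by omega)]
    simp

end Stmt0Aux

theorem stmt0 (f : ℝ → ℝ → ℝ)
    (hbdd : ∃ B : ℝ, ∀ a b : ℝ, a ≤ b → b ≤ a + 2 * Real.pi → |f a b| ≤ B)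
    (hdeg : ∀ a : ℝ, f a a = 0)
    (hper : ∀ a b : ℝ, f (a + 2 * Real.pi) (b + 2 * Real.pi) = f a b)
    (hineq : ∀ a b c d : ℝ, a ≤ b → b ≤ c → c ≤ d → d ≤ a + 2 * Real.pi →
      f a d + f b c ≤ f a c + f b d)
    (n : ℕ) (hn : 4 ≤ n) :
    Mseq f (n - 1) + Mseq f (n + 1) ≤ 2 * Mseq f n := by
  classical
  set S1 := {s | ∃ x : Fin ((n-1) + 1) → ℝ, Monotone x ∧
      x (Fin.last (n-1)) = x 0 + 2 * Real.pi ∧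
      s = ∑ i : Fin (n-1), f (x i.castSucc) (x i.succ)} with hS1
  set S2 := {s | ∃ x : Fin ((n+1) + 1) → ℝ, Monotone x ∧
      x (Fin.last (n+1)) = x 0 + 2 * Real.pi ∧
      s = ∑ i : Fin (n+1), f (x i.castSucc) (x i.succ)} with hS2
  have hM1 : Mseq f (n-1) = sSup S1 := rfl
  have hM2 : Mseq f (n+1) = sSup S2 := rfl
  obtain ⟨s1, hs1⟩ := Stmt0Aux.mseq_nonempty (f := f) (n-1) (by omega)
  obtain ⟨s2, hs2⟩ := Stmt0Aux.mseq_nonempty (f := f) (n+1) (by omega)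
  have hkey : ∀ a ∈ S1, ∀ b ∈ S2, a + b ≤ 2 * Mseq f n := by
    intro a ha b hb
    obtain ⟨X, hX, rfl⟩ := Stmt0Aux.mem_to_TN (f := f) ha
    obtain ⟨Y, hY, rfl⟩ := Stmt0Aux.mem_to_TN (f := f) hb
    have hk := Stmt0Aux.key hbdd hper hineq (N := n) (p := n+1) (q := n-1)
      (by omega) (by omega) (by omega) hY hX
    linarith
  rw [hM1, hM2]
  have h1 : sSup S1 ≤ 2 * Mseq f n - sSup S2 := by
    apply csSup_le ⟨s1, hs1⟩
    intro a ha
    have h2 : sSup S2 ≤ 2 * Mseq f n - a := by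
      apply csSup_le ⟨s2, hs2⟩
      intro b hb
      have := hkey a ha b hb
      linarith
    linarith
  linarith
end

section
/- Let f : S → ℝ be a bounded function on closed counterclockwise arcs of S¹ with f(degenerate arc) = 0, satisfying the superadditivity-type condition f(arc(x₁,x₃)) + f(arc(x₂,x₄)) ≥ f(arc(x₁,x₄)) + f(arc(x₂,x₃)) for all x₁,x₂,x₃,x₄ in counterclockwise order. Suppose k ≥ 2 divides n, f is invariant under rotation by 2π/k, and there exists an n-element tiling X of S¹ attaining Mₙ = Σ_{S∈X} f(S). Then there exists an n-element tiling X' of S¹ with k-fold rotational symmetry such that Mₙ = Σ_{S∈X'} f(S). -/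
open Finset

def IsTil (n : ℕ) (g : ℕ → ℝ) : Prop :=
  Monotone g ∧ ∀ i, g (i + n) = g i + 2 * Real.pi

noncomputable def Ssum (f : ℝ → ℝ → ℝ) (n : ℕ) (g : ℕ → ℝ) : ℝ :=
  ∑ i ∈ Finset.range n, f (g i) (g (i + 1))

lemma Ssum_mem (f : ℝ → ℝ → ℝ) (n : ℕ) (g : ℕ → ℝ) (hg : IsTil n g) :
    Ssum f n g ∈ {s | ∃ x : Fin (n + 1) → ℝ, Monotone x ∧ x (Fin.last n) = x 0 + 2 * Real.pi ∧
      s = ∑ i : Fin n, f (x i.castSucc) (x i.succ)} := by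
  refine ⟨fun i => g i, ?_, ?_, ?_⟩
  · intro i j hij
    exact hg.1 hij
  · simpa using hg.2 0
  · rw [Ssum, ← Fin.sum_univ_eq_sum_range (fun i => f (g i) (g (i + 1))) n]
    apply Finset.sum_congr rfl
    intro i _
    simp [Fin.coe_castSucc, Fin.val_succ]

lemma sum_window (n : ℕ) (h : ℕ → ℝ) (hp : ∀ i, h (i + n) = h i) (m : ℕ) :
    ∑ i ∈ range n, h (i + m) = ∑ i ∈ range n, h i := by
  induction m with
  | zero => simp
  | succ m ih =>
    have e1 : ∑ i ∈ range (n + 1), h (i + m) = (∑ i ∈ range n, h (i + m)) + h (n + m) :=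
      Finset.sum_range_succ _ n
    have e2 : ∑ i ∈ range (n + 1), h (i + m) = (∑ i ∈ range n, h (i + 1 + m)) + h (0 + m) :=
      Finset.sum_range_succ' _ n
    have e3 : h (n + m) = h (0 + m) := by
      rw [Nat.add_comm n m, Nat.zero_add]
      exact hp m
    have e5 : ∑ i ∈ range n, h (i + (m + 1)) = ∑ i ∈ range n, h (i + 1 + m) := by
      apply Finset.sum_congr rfl
      intro i _
      congr 1
      omega
    rw [e5]
    have : ∑ i ∈ range n, h (i + 1 + m) = ∑ i ∈ range n, h (i + m) := by linarith
    rw [this, ih]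

lemma shift_til (n m : ℕ) (c : ℝ) (g : ℕ → ℝ) (hg : IsTil n g) :
    IsTil n (fun i => g (i + m) - c) := by
  constructor
  · intro i j hij
    have := hg.1 (Nat.add_le_add_right hij m)
    simpa using sub_le_sub_right this c
  · intro i
    simp only
    have h1 : i + n + m = i + m + n := by omega
    rw [h1, hg.2]
    ring

lemma shift_sum (f : ℝ → ℝ → ℝ) (n m : ℕ) (c : ℝ)
    (hsym' : ∀ a b : ℝ, f (a - c) (b - c) = f a b)
    (hper : ∀ a b : ℝ, f (a + 2 * Real.pi) (b + 2 * Real.pi) = f a b)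
    (g : ℕ → ℝ) (hg : IsTil n g) :
    Ssum f n (fun i => g (i + m) - c) = Ssum f n g := by
  have hp : ∀ i, f (g (i + n)) (g (i + n + 1)) = f (g i) (g (i + 1)) := by
    intro i
    have h1 : i + n + 1 = i + 1 + n := by omega
    rw [hg.2 i, h1, hg.2 (i + 1), hper]
  calc Ssum f n (fun i => g (i + m) - c)
      = ∑ i ∈ range n, f (g (i + m)) (g (i + m + 1)) := by
        rw [Ssum]
        apply Finset.sum_congr rfl
        intro i _
        have h1 : i + 1 + m = i + m + 1 := by omega
        show f (g (i + m) - c) (g (i + 1 + m) - c) = _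
        rw [h1, hsym']
    _ = ∑ i ∈ range n, f (g i) (g (i + 1)) :=
        sum_window n (fun i => f (g i) (g (i + 1))) hp m
    _ = Ssum f n g := rfl

lemma minmax_til (f : ℝ → ℝ → ℝ) (n : ℕ) (hn : 1 ≤ n)
    (hineq : ∀ a b c d : ℝ, a ≤ b → b ≤ c → c ≤ d → d ≤ a + 2 * Real.pi →
      f a d + f b c ≤ f a c + f b d)
    (g g' : ℕ → ℝ) (hg : IsTil n g) (hg' : IsTil n g') :
    IsTil n (fun i => min (g i) (g' i)) ∧ IsTil n (fun i => max (g i) (g' i)) ∧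
    Ssum f n g + Ssum f n g' ≤
      Ssum f n (fun i => min (g i) (g' i)) + Ssum f n (fun i => max (g i) (g' i)) := by
  have hb : ∀ (u : ℕ → ℝ), IsTil n u → ∀ i, u (i + 1) ≤ u i + 2 * Real.pi := by
    intro u hu i
    have h1 : u (i + 1) ≤ u (i + n) := hu.1 (by omega)
    rw [hu.2] at h1
    exact h1
  refine ⟨⟨?_, ?_⟩, ⟨?_, ?_⟩, ?_⟩
  · intro i j hij
    exact min_le_min (hg.1 hij) (hg'.1 hij)
  · intro i
    simp only
    rw [hg.2, hg'.2]
    rcases le_total (g i) (g' i) with h | h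
    · rw [min_eq_left (by linarith), min_eq_left h]
    · rw [min_eq_right (by linarith), min_eq_right h]
  · intro i j hij
    exact max_le_max (hg.1 hij) (hg'.1 hij)
  · intro i
    simp only
    rw [hg.2, hg'.2]
    rcases le_total (g i) (g' i) with h | h
    · rw [max_eq_right (by linarith), max_eq_right h]
    · rw [max_eq_left (by linarith), max_eq_left h]
  · rw [Ssum, Ssum, Ssum, Ssum, ← Finset.sum_add_distrib, ← Finset.sum_add_distrib]
    apply Finset.sum_le_sum
    intro i _
    rcases le_total (g i) (g' i) with h1 | h1 <;>
      rcases le_total (g (i + 1)) (g' (i + 1)) with h2 | h2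
    · rw [min_eq_left h1, min_eq_left h2, max_eq_right h1, max_eq_right h2]
    · have := hineq (g i) (g' i) (g' (i + 1)) (g (i + 1)) h1 (hg'.1 (Nat.le_succ i)) h2
        (hb g hg i)
      rw [min_eq_left h1, min_eq_right h2, max_eq_right h1, max_eq_left h2]
      linarith
    · have := hineq (g' i) (g i) (g (i + 1)) (g' (i + 1)) h1 (hg.1 (Nat.le_succ i)) h2
        (hb g' hg' i)
      rw [min_eq_right h1, min_eq_left h2, max_eq_left h1, max_eq_right h2]
      linarith
    · rw [min_eq_right h1, min_eq_right h2, max_eq_left h1, max_eq_left h2]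
      linarith

lemma Ssum_le_Mseq (f : ℝ → ℝ → ℝ) (B : ℝ)
    (hB : ∀ a b : ℝ, a ≤ b → b ≤ a + 2 * Real.pi → |f a b| ≤ B)
    (n : ℕ) (g : ℕ → ℝ) (hg : IsTil n g) : Ssum f n g ≤ Mseq f n := by
  apply le_csSup
  · refine ⟨n * B, ?_⟩
    rintro s ⟨x, hm, hc, rfl⟩
    calc ∑ i : Fin n, f (x i.castSucc) (x i.succ) ≤ ∑ _i : Fin n, B := by
          apply Finset.sum_le_sum
          intro i _
          have h1 : x i.castSucc ≤ x i.succ := hm (Fin.castSucc_le_succ i)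
          have h2 : x i.succ ≤ x i.castSucc + 2 * Real.pi := by
            have ha := hm (Fin.le_last i.succ)
            rw [hc] at ha
            have hb2 := hm (Fin.zero_le i.castSucc)
            linarith
          calc f (x i.castSucc) (x i.succ) ≤ |f (x i.castSucc) (x i.succ)| := le_abs_self _
            _ ≤ B := hB _ _ h1 h2
      _ = n * B := by simp [Finset.sum_const, Finset.card_univ, nsmul_eq_mul]
  · exact Ssum_mem f n g hg

theorem stmt2 (f : ℝ → ℝ → ℝ)
    (hbdd : ∃ B : ℝ, ∀ a b : ℝ, a ≤ b → b ≤ a + 2 * Real.pi → |f a b| ≤ B)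
    (hdeg : ∀ a : ℝ, f a a = 0)
    (hper : ∀ a b : ℝ, f (a + 2 * Real.pi) (b + 2 * Real.pi) = f a b)
    (hineq : ∀ a b c d : ℝ, a ≤ b → b ≤ c → c ≤ d → d ≤ a + 2 * Real.pi →
      f a d + f b c ≤ f a c + f b d)
    (n k : ℕ) (hk : 2 ≤ k) (hdvd : k ∣ n) (hn : 3 ≤ n)
    -- `f` has `k`-fold rotational symmetry:
    (hsym : ∀ a b : ℝ, f (a + 2 * Real.pi / k) (b + 2 * Real.pi / k) = f a b)
    -- an `n`-element tiling attaining `Mₙ`: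
    (x : Fin (n + 1) → ℝ) (hmono : Monotone x)
    (hclosed : x (Fin.last n) = x 0 + 2 * Real.pi)
    (hmax : Mseq f n = ∑ i : Fin n, f (x i.castSucc) (x i.succ)) :
    -- there is an `n`-element tiling with `k`-fold rotational symmetry attaining `Mₙ`:
    ∃ y : Fin (n + 1) → ℝ, Monotone y ∧ y (Fin.last n) = y 0 + 2 * Real.pi ∧
      (∀ i : Fin (n + 1), ∀ h : (i : ℕ) + n / k ≤ n,
        y ⟨(i : ℕ) + n / k, by omega⟩ = y i + 2 * Real.pi / k) ∧
      Mseq f n = ∑ i : Fin n, f (y i.castSucc) (y i.succ) := by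
  obtain ⟨B, hB⟩ := hbdd
  have hn0 : 0 < n := by omega
  have hk0 : 0 < k := by omega
  set m := n / k with hm
  have hmk : m * k = n := Nat.div_mul_cancel hdvd
  have hm0 : 0 < m := Nat.div_pos (Nat.le_of_dvd (by omega) hdvd) hk0
  have hkm : k * m = n := by rw [Nat.mul_comm]; exact hmk
  set c : ℝ := 2 * Real.pi / k with hc
  have hkR : (k : ℝ) ≠ 0 := Nat.cast_ne_zero.mpr (by omega)
  have hkc : (k : ℝ) * c = 2 * Real.pi := by
    rw [hc]; field_simp
  have hsym' : ∀ a b : ℝ, f (a - c) (b - c) = f a b := by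
    intro a b
    have h := hsym (a - c) (b - c)
    simpa using h.symm
  -- the periodic extension of x
  set E : ℕ → ℝ := fun i =>
    x ⟨i % n, Nat.lt_succ_of_lt (Nat.mod_lt _ hn0)⟩ + ((i / n : ℕ) : ℝ) * (2 * Real.pi)
    with hE
  have hEval : ∀ j, (hj : j < n + 1) → E j = x ⟨j, hj⟩ := by
    intro j hj
    rcases lt_or_eq_of_le (Nat.lt_succ_iff.mp hj) with hj' | hj'
    · simp only [hE, Nat.mod_eq_of_lt hj', Nat.div_eq_of_lt hj', Nat.cast_zero, zero_mul,
        add_zero]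
    · have e1 : j % n = 0 := by rw [hj', Nat.mod_self]
      have e2 : j / n = 1 := by rw [hj', Nat.div_self hn0]
      simp only [hE, e1, e2, Nat.cast_one, one_mul]
      have h0 : x (⟨0, Nat.succ_pos n⟩ : Fin (n + 1)) = x 0 := rfl
      rw [h0, ← hclosed]
      exact congrArg x (Fin.ext hj'.symm)
  have hEmono : ∀ i : ℕ, E i ≤ E (i + 1) := by
    intro i
    obtain ⟨q, r, hr, hi⟩ : ∃ q r, r < n ∧ i = n * q + r :=
      ⟨i / n, i % n, Nat.mod_lt _ hn0, (Nat.div_add_mod i n).symm⟩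
    subst hi
    have e1 : (n * q + r) % n = r := by rw [Nat.mul_add_mod, Nat.mod_eq_of_lt hr]
    have e2 : (n * q + r) / n = q := by
      rw [Nat.mul_add_div hn0, Nat.div_eq_of_lt hr, Nat.add_zero]
    rcases lt_or_eq_of_le (Nat.succ_le_of_lt hr) with h | h
    · have e3 : (n * q + r + 1) % n = r + 1 := by
        rw [Nat.add_assoc, Nat.mul_add_mod, Nat.mod_eq_of_lt h]
      have e4 : (n * q + r + 1) / n = q := by
        rw [Nat.add_assoc, Nat.mul_add_div hn0, Nat.div_eq_of_lt h, Nat.add_zero]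
      simp only [hE, e1, e2, e3, e4]
      have hxx : x ⟨r, Nat.lt_succ_of_lt hr⟩ ≤ x ⟨r + 1, Nat.lt_succ_of_lt h⟩ :=
        hmono (by simp [Fin.mk_le_mk])
      linarith
    · have hnq : n * q + r + 1 = n * (q + 1) := by rw [Nat.mul_succ]; omega
      have e3 : (n * q + r + 1) % n = 0 := by rw [hnq, Nat.mul_mod_right]
      have e4 : (n * q + r + 1) / n = q + 1 := by
        rw [hnq, Nat.mul_div_cancel_left _ hn0]
      simp only [hE, e1, e2, e3, e4]
      have hxx : x ⟨r, Nat.lt_succ_of_lt hr⟩ ≤ x (Fin.last n) := hmono (Fin.le_last _)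
      rw [hclosed] at hxx
      have h0 : x (⟨0, Nat.succ_pos n⟩ : Fin (n + 1)) = x 0 := rfl
      rw [h0]
      push_cast
      linarith
  have hEt : IsTil n E := by
    constructor
    · exact monotone_nat_of_le_succ hEmono
    · intro i
      simp only [hE, Nat.add_mod_right, Nat.add_div_right _ hn0]
      push_cast
      ring
  have hsumE : ∑ i : Fin n, f (x i.castSucc) (x i.succ) = Ssum f n E := by
    rw [Ssum, ← Fin.sum_univ_eq_sum_range (fun j => f (E j) (E (j + 1))) n]
    apply Finset.sum_congr rfl
    intro i _
    have h1 : E (i : ℕ) = x i.castSucc :=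
      (hEval _ (Nat.lt_succ_of_lt i.isLt)).trans (congrArg x (Fin.ext rfl))
    have h2 : E ((i : ℕ) + 1) = x i.succ :=
      (hEval _ (Nat.succ_lt_succ i.isLt)).trans (congrArg x (Fin.ext rfl))
    rw [h1, h2]
  have hME : Mseq f n = Ssum f n E := by rw [hmax, hsumE]
  -- rotated tilings
  set g : ℕ → ℕ → ℝ := fun j i => E (i + j * m) - j * c with hgdef
  have hgstep : ∀ j, g (j + 1) = fun i => g j (i + m) - c := by
    intro j
    funext i
    simp only [hgdef]
    have h1 : i + (j + 1) * m = i + m + j * m := by ring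
    rw [h1]
    push_cast
    ring
  have hg0 : g 0 = E := by
    funext i
    simp [hgdef]
  have hgprop : ∀ j, IsTil n (g j) ∧ Ssum f n (g j) = Ssum f n E := by
    intro j
    induction j with
    | zero => rw [hg0]; exact ⟨hEt, rfl⟩
    | succ j ih =>
      rw [hgstep j]
      exact ⟨shift_til n m c (g j) ih.1,
        by rw [shift_sum f n m c hsym' hper (g j) ih.1, ih.2]⟩
  have hgk : g k = g 0 := by
    funext i
    simp only [hgdef, Nat.zero_mul, Nat.add_zero, Nat.cast_zero, zero_mul, sub_zero]
    have h1 : i + k * m = i + n := by rw [hkm]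
    rw [h1, hEt.2, ← hkc]
    push_cast
    ring
  -- progressive minima
  set q : ℕ → ℕ → ℝ :=
    fun j i => (Finset.range (j + 1)).inf' Finset.nonempty_range_add_one (fun l => g l i) with hq
  have hq0 : q 0 = E := by
    funext i
    simp [hq, hg0]
  have hqsucc : ∀ j, q (j + 1) = fun i => min (g (j + 1) i) (q j i) := by
    intro j
    funext i
    simp only [hq, Finset.range_add_one]
    exact Finset.inf'_insert (H := Finset.insert_nonempty _ _) (fun l => g l i)
  have hqprop : ∀ j, IsTil n (q j) ∧ Ssum f n (q j) = Mseq f n := by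
    intro j
    induction j with
    | zero => rw [hq0]; exact ⟨hEt, hME.symm⟩
    | succ j ih =>
      obtain ⟨hgt, hgs⟩ := hgprop (j + 1)
      have hmm := minmax_til f n (by omega) hineq (g (j + 1)) (q j) hgt ih.1
      have h1 : Ssum f n (fun i => min (g (j + 1) i) (q j i)) ≤ Mseq f n :=
        Ssum_le_Mseq f B hB n _ hmm.1
      have h2 : Ssum f n (fun i => max (g (j + 1) i) (q j i)) ≤ Mseq f n :=
        Ssum_le_Mseq f B hB n _ hmm.2.1
      have h3 := hmm.2.2
      rw [hqsucc j]
      refine ⟨hmm.1, ?_⟩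
      have h4 : Ssum f n (g (j + 1)) + Ssum f n (q j) = Mseq f n + Mseq f n := by
        rw [hgs, ih.2, hME]
      linarith
  have hk1 : k - 1 + 1 = k := by omega
  have hqle : ∀ i l, l < k → q (k - 1) i ≤ g l i := by
    intro i l hl
    simp only [hq]
    exact Finset.inf'_le _ (Finset.mem_range.mpr (by omega))
  have hqge : ∀ i (a : ℝ), (∀ l, l < k → a ≤ g l i) → a ≤ q (k - 1) i := by
    intro i a ha
    simp only [hq]
    apply Finset.le_inf'
    intro l hl
    exact ha l (by rw [Finset.mem_range] at hl; omega)
  have key : ∀ l i, g l (i + m) = g (l + 1) i + c := by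
    intro l i
    have h := congrFun (hgstep l) i
    linarith
  have hsymq : ∀ i, q (k - 1) (i + m) = q (k - 1) i + c := by
    intro i
    apply le_antisymm
    · rw [← sub_le_iff_le_add]
      apply hqge
      intro l hl
      rcases Nat.eq_zero_or_pos l with rfl | hl0
      · have h2 := key (k - 1) i
        rw [hk1, hgk] at h2
        have h3 := hqle (i + m) (k - 1) (by omega)
        linarith
      · obtain ⟨l', rfl⟩ : ∃ l', l = l' + 1 := ⟨l - 1, by omega⟩
        have h2 := key l' i
        have h3 := hqle (i + m) l' (by omega)
        linarith
    · apply hqge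
      intro l hl
      rw [key l i]
      rcases eq_or_lt_of_le (show l + 1 ≤ k by omega) with h | h
      · have h3 := hqle i 0 (by omega)
        have h4 : g (l + 1) i = g 0 i := by rw [h, hgk]
        linarith
      · have h3 := hqle i (l + 1) h
        linarith
  obtain ⟨hqt, hqs⟩ := hqprop (k - 1)
  refine ⟨fun i => q (k - 1) (i : ℕ), ?_, ?_, ?_, ?_⟩
  · intro i j hij
    exact hqt.1 hij
  · simpa using hqt.2 0
  · intro i h
    exact hsymq (i : ℕ)
  · have h1 : ∑ i : Fin n, f (q (k - 1) (i.castSucc : ℕ)) (q (k - 1) (i.succ : ℕ)) =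
        Ssum f n (q (k - 1)) := by
      rw [Ssum, ← Fin.sum_univ_eq_sum_range (fun j => f (q (k - 1) j) (q (k - 1) (j + 1))) n]
      apply Finset.sum_congr rfl
      intro i _
      simp [Fin.coe_castSucc, Fin.val_succ]
    rw [h1, hqs]
end

section
/- Let C be an o-symmetric convex disk in ℝ². A closed set K ⊊ ℝ² is C-convex if and only if K is an intersection of translates of C. -/
open Set

noncomputable section

/-- The plane. -/
abbrev P2 := ℝ × ℝ

/-- The translate of `C` by the vector `x`. -/
def tr (C : Set P2) (x : P2) : Set P2 := (x + ·) '' C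

/-- The `C`-spindle of `p` and `q`: the intersection of all translates of `C` containing both
`p` and `q` (equal to all of `ℝ²` if there is no such translate). -/
def spindle (C : Set P2) (p q : P2) : Set P2 :=
  ⋂ x ∈ {x : P2 | p ∈ tr C x ∧ q ∈ tr C x}, tr C x

/-- `K` is `C`-(spindle) convex. -/
def CConvexSet (C K : Set P2) : Prop := ∀ p ∈ K, ∀ q ∈ K, spindle C p q ⊆ K

/-- `C` is an `o`-symmetric convex disk: compact, convex, with nonempty interior,
symmetric about the origin. -/
def SymDisk (C : Set P2) : Prop :=
  IsCompact C ∧ Convex ℝ C ∧ (interior C).Nonempty ∧ ∀ x ∈ C, -x ∈ C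

/-- A convex body (convex disk) in the plane. -/
def ConvBody (K : Set P2) : Prop := IsCompact K ∧ Convex ℝ K ∧ (interior K).Nonempty

/-- Cross product (orientation determinant) of two plane vectors. -/
def detv (a b : P2) : ℝ := a.1 * b.2 - a.2 * b.1

/-- A (cyclic) list of points is in (weak) counterclockwise convex position order. -/
def InConvexOrder {m : ℕ} (v : Fin m → P2) : Prop :=
  ∀ i j k : Fin m, i < j → j < k → 0 ≤ detv (v j - v i) (v k - v i)

/-- The `C`-perimeter of a set `K`: the supremum of the `C`-perimeters of convex polygons
inscribed in `K`, a polygon being given by a closed cyclic sequence of vertices in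
counterclockwise convex position, with side lengths measured by the gauge (Minkowski
functional) of `C`. -/
def CPerim (C K : Set P2) : ℝ :=
  sSup {s | ∃ m : ℕ, ∃ v : Fin (m + 1) → P2, (∀ i, v i ∈ K) ∧ InConvexOrder v ∧
    v (Fin.last m) = v 0 ∧ s = ∑ i : Fin m, gauge C (v i.succ - v i.castSucc)}

/-- The `C`-length of a curve `γ : [0,1] → ℝ²`: supremum of inscribed polygonal
`‖·‖_C`-lengths. -/
def CLength (C : Set P2) (γ : ℝ → P2) : ℝ :=
  sSup {s | ∃ n : ℕ, ∃ t : Fin (n + 1) → ℝ, Monotone t ∧ t 0 = 0 ∧ t (Fin.last n) = 1 ∧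
    s = ∑ i : Fin n, gauge C (γ (t i.succ) - γ (t i.castSucc))}

/-- The set of `C`-lengths of arcs joining `x` and `y` contained in the boundary of some
translate of `C`. -/
def arcSet (C : Set P2) (x y : P2) : Set ℝ :=
  {s | ∃ z : P2, ∃ γ : ℝ → P2, ContinuousOn γ (Icc 0 1) ∧ γ 0 = x ∧ γ 1 = y ∧
    γ '' Icc 0 1 ⊆ frontier (tr C z) ∧ s = CLength C γ}

/-- The `C`-arc-distance of `x` and `y`. -/
def arcDist (C : Set P2) (x y : P2) : ℝ := sInf (arcSet C x y)

/-- The `C`-convex hull of `X`: the intersection of all translates of `C` containing `X`. -/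
def convC (C X : Set P2) : Set P2 := ⋂ x ∈ {x : P2 | X ⊆ tr C x}, tr C x

/-- `Q` is a `C`-`n`-gon: an intersection of `n` translates of `C`. -/
def Cngon (C : Set P2) (n : ℕ) (Q : Set P2) : Prop :=
  ∃ x : Fin n → P2, Q = ⋂ i, tr C (x i)

/-- `K` is an intersection of translates of `C`. -/
def IsCIntersection (C K : Set P2) : Prop := ∃ T : Set P2, K = ⋂ x ∈ T, tr C x

/-- `â_n^C(K)`: the supremum of the areas of `C`-`n`-gons inscribed in `K`. -/
def ahat (C : Set P2) (n : ℕ) (K : Set P2) : ℝ :=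
  sSup {s | ∃ Q : Set P2, Cngon C n Q ∧ Q ⊆ K ∧ s = (MeasureTheory.volume Q).toReal}

/-- `Â_n^C(K)`: the infimum of the areas of `C`-`n`-gons circumscribed about `K`. -/
def Ahat (C : Set P2) (n : ℕ) (K : Set P2) : ℝ :=
  sInf {s | ∃ Q : Set P2, Cngon C n Q ∧ K ⊆ Q ∧ s = (MeasureTheory.volume Q).toReal}

/-- `p̂_n^C(K)`: the supremum of the `C`-perimeters of `C`-`n`-gons inscribed in `K`. -/
def phat (C : Set P2) (n : ℕ) (K : Set P2) : ℝ :=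
  sSup {s | ∃ Q : Set P2, Cngon C n Q ∧ Q ⊆ K ∧ s = CPerim C Q}

/-- `P̂_n^C(K)`: the infimum of the `C`-perimeters of `C`-`n`-gons circumscribed about `K`. -/
def Phat (C : Set P2) (n : ℕ) (K : Set P2) : ℝ :=
  sInf {s | ∃ Q : Set P2, Cngon C n Q ∧ K ⊆ Q ∧ s = CPerim C Q}

end
section Infra

lemma mem_tr {C : Set P2} {x z : P2} : z ∈ tr C x ↔ z - x ∈ C := by
  constructor
  · rintro ⟨c, hc, rfl⟩; simpa using hc
  · intro h; exact ⟨z - x, h, by ring⟩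

lemma tiny (δ x : ℝ) (hδ : 0 < δ) : ∃ θ : ℝ, 0 < θ ∧ θ ≤ 1 ∧ θ * |x| < δ := by
  refine ⟨min 1 (δ / (1 + |x|)), ?_, min_le_left _ _, ?_⟩
  · have : 0 < δ / (1 + |x|) := div_pos hδ (by positivity)
    exact lt_min one_pos this
  · have h1 : min 1 (δ / (1 + |x|)) ≤ δ / (1 + |x|) := min_le_right _ _
    have hx : (0:ℝ) ≤ |x| := abs_nonneg x
    calc min 1 (δ / (1 + |x|)) * |x| ≤ δ / (1 + |x|) * |x| := by
          apply mul_le_mul_of_nonneg_right h1 hx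
      _ < δ := by
          rw [div_mul_eq_mul_div, div_lt_iff₀ (by positivity)]
          nlinarith

lemma le_limit {a x β : ℝ} (h : ∀ θ : ℝ, 0 < θ → θ ≤ 1 → a + θ * x < β) : a ≤ β := by
  by_contra h'
  push_neg at h'
  obtain ⟨θ, hθ0, hθ1, hθx⟩ := tiny (a - β) x (by linarith)
  have h2 := h θ hθ0 hθ1
  have h3 : -(θ * |x|) ≤ θ * x := by
    have := neg_abs_le x
    nlinarith
  linarith

lemma ge_limit {a x β : ℝ} (h : ∀ θ : ℝ, 0 < θ → θ ≤ 1 → β ≤ a + θ * x) : β ≤ a := by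
  by_contra h'
  push_neg at h'
  obtain ⟨θ, hθ0, hθ1, hθx⟩ := tiny (β - a) x (by linarith)
  have h2 := h θ hθ0 hθ1
  have h3 : θ * x ≤ θ * |x| := by
    have := le_abs_self x
    nlinarith
  linarith

def e1 : P2 := (1, 0)
def e2 : P2 := (0, 1)

lemma clm_eval (g : P2 →L[ℝ] ℝ) (x : P2) : g x = x.1 * g e1 + x.2 * g e2 := by
  have hx : x = x.1 • e1 + x.2 • e2 := by
    simp [e1, e2, Prod.ext_iff]
  conv_lhs => rw [hx]
  simp [smul_eq_mul]

lemma solve2 (u ψ : P2 →L[ℝ] ℝ) (hΔ : u e1 * ψ e2 - u e2 * ψ e1 ≠ 0) (r s : ℝ) :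
    ∃ d : P2, u d = r ∧ ψ d = s := by
  set Δ := u e1 * ψ e2 - u e2 * ψ e1 with hΔdef
  refine ⟨((r * ψ e2 - s * u e2) / Δ, (s * u e1 - r * ψ e1) / Δ), ?_, ?_⟩
  · rw [clm_eval u]; field_simp; ring
  · rw [clm_eval ψ]; field_simp; ring

lemma repr2 (u ψ η : P2 →L[ℝ] ℝ) (hΔ : u e1 * ψ e2 - u e2 * ψ e1 ≠ 0) :
    ∃ c₁ c₂ : ℝ, ∀ d, η d = c₁ * u d + c₂ * ψ d := by
  set Δ := u e1 * ψ e2 - u e2 * ψ e1 with hΔdef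
  refine ⟨(η e1 * ψ e2 - η e2 * ψ e1) / Δ, (η e2 * u e1 - η e1 * u e2) / Δ, fun d => ?_⟩
  rw [clm_eval η d, clm_eval u d, clm_eval ψ d]
  field_simp
  ring

lemma dep2 (u ψ : P2 →L[ℝ] ℝ) (hΔ : u e1 * ψ e2 - u e2 * ψ e1 = 0) :
    (∀ d, u d = 0) ∨ ∃ lam : ℝ, ∀ d, ψ d = lam * u d := by
  by_cases h1 : u e1 = 0
  · by_cases h2 : u e2 = 0
    · left; intro d; rw [clm_eval u d, h1, h2]; ring
    · right
      refine ⟨ψ e2 / u e2, fun d => ?_⟩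
      have hψ1 : ψ e1 = 0 := by
        have : u e2 * ψ e1 = 0 := by rw [h1] at hΔ; linarith
        rcases mul_eq_zero.1 this with h | h
        · exact absurd h h2
        · exact h
      rw [clm_eval ψ d, clm_eval u d, hψ1, h1]
      field_simp
      ring
  · right
    refine ⟨ψ e1 / u e1, fun d => ?_⟩
    have hψ2 : ψ e2 = u e2 * ψ e1 / u e1 := by
      field_simp
      linarith
    rw [clm_eval ψ d, clm_eval u d, hψ2]
    field_simp

end Infra

section ConeSplit

lemma combo_pt {A : Set P2} (hAv : Convex ℝ A) {zb y : P2} (hzb : zb ∈ interior A) (hy : y ∈ A)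
    {θ : ℝ} (h0 : 0 < θ) (h1 : θ ≤ 1) : θ • zb + (1 - θ) • y ∈ interior A :=
  hAv.combo_interior_closure_mem_interior hzb (subset_closure hy) h0 (by linarith) (by ring)

lemma combo_val (u : P2 →L[ℝ] ℝ) (zb y : P2) (θ : ℝ) :
    u (θ • zb + (1 - θ) • y) = u y + θ * (u zb - u y) := by
  simp only [map_add, map_smul, smul_eq_mul]
  ring

lemma halfspace_open (u : P2 →L[ℝ] ℝ) (r : ℝ) : IsOpen {x : P2 | r < u x} :=
  isOpen_lt continuous_const u.continuous

lemma halfspace_convex (u : P2 →L[ℝ] ℝ) (r : ℝ) : Convex ℝ {x : P2 | r < u x} := by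
  have := (convex_Ioi (𝕜 := ℝ) r).linear_preimage (u : P2 →ₗ[ℝ] ℝ)
  exact this

lemma halfspace_open' (u : P2 →L[ℝ] ℝ) (r : ℝ) : IsOpen {x : P2 | u x < r} :=
  isOpen_lt u.continuous continuous_const

lemma halfspace_convex' (u : P2 →L[ℝ] ℝ) (r : ℝ) : Convex ℝ {x : P2 | u x < r} := by
  have := (convex_Iio (𝕜 := ℝ) r).linear_preimage (u : P2 →ₗ[ℝ] ℝ)
  exact this

lemma side_normal (S : Set P2) (hSv : Convex ℝ S) (zb : P2) (hzbS : zb ∈ interior S)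
    (ebar : P2) (hebS : ebar ∈ S) (u ψ : P2 →L[ℝ] ℝ) (β : ℝ)
    (hΔ : u e1 * ψ e2 - u e2 * ψ e1 ≠ 0)
    (hβe : ψ ebar = β)
    (hcond : ∀ y ∈ S, u ebar ≤ u y → ψ y ≤ β) :
    ∃ (c₁ c₂ : ℝ) (η : P2 →L[ℝ] ℝ), 0 ≤ c₁ ∧ 0 ≤ c₂ ∧
      (∀ d, η d = c₁ * u d + c₂ * ψ d) ∧
      (∀ y ∈ S, η (y - ebar) ≤ 0) ∧ η (zb - ebar) < 0 := by
  obtain ⟨d11, hd11u, hd11ψ⟩ := solve2 u ψ hΔ 1 1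
  obtain ⟨dr, hdru, hdrψ⟩ := solve2 u ψ hΔ 1 0
  obtain ⟨dc, hdcu, hdcψ⟩ := solve2 u ψ hΔ 0 1
  set O : Set P2 := {d : P2 | ebar + d ∈ interior S} with hOdef
  have hOo : IsOpen O := isOpen_interior.preimage (continuous_const.add continuous_id)
  have hOv : Convex ℝ O := by
    intro d₁ h₁ d₂ h₂ a b ha hb hab
    have key : ebar + (a • d₁ + b • d₂) = a • (ebar + d₁) + b • (ebar + d₂) := by
      rw [smul_add, smul_add, show a • ebar + a • d₁ + (b • ebar + b • d₂)
          = (a + b) • ebar + (a • d₁ + b • d₂) by rw [add_smul]; abel, hab, one_smul]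
    show ebar + (a • d₁ + b • d₂) ∈ interior S
    rw [key]
    exact hSv.interior h₁ h₂ ha hb hab
  set Q : Set P2 := {d : P2 | 0 < u d ∧ 0 < ψ d} with hQdef
  have hQo : IsOpen Q := (halfspace_open u 0).inter (halfspace_open ψ 0)
  have hQv : Convex ℝ Q := (halfspace_convex u 0).inter (halfspace_convex ψ 0)
  have hdisj : Disjoint O Q := by
    rw [Set.disjoint_left]
    rintro d hdO ⟨hdu, hdψ⟩
    have hyS : ebar + d ∈ S := interior_subset hdO
    have h1 : u ebar ≤ u (ebar + d) := by rw [map_add]; linarith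
    have h2 := hcond _ hyS h1
    rw [map_add, hβe] at h2
    linarith
  obtain ⟨η, δ, hη₁, hη₂⟩ := geometric_hahn_banach_open hOv hOo hQv hdisj
  have hzbO : zb - ebar ∈ O := by
    show ebar + (zb - ebar) ∈ interior S
    rw [add_sub_cancel]
    exact hzbS
  have hδ0 : δ = 0 := by
    have hle : δ ≤ 0 := by
      apply ge_limit (a := (0:ℝ)) (x := η d11)
      intro s hs0 hs1
      have hmem : s • d11 ∈ Q := by
        constructor
        · rw [map_smul, smul_eq_mul, hd11u]; linarith
        · rw [map_smul, smul_eq_mul, hd11ψ]; linarith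
      have := hη₂ _ hmem
      rw [map_smul, smul_eq_mul] at this
      linarith
    have hge : 0 ≤ δ := by
      apply le_limit (a := (0:ℝ)) (x := η (zb - ebar))
      intro θ hθ0 hθ1
      have hmem : θ • (zb - ebar) ∈ O := by
        show ebar + θ • (zb - ebar) ∈ interior S
        have key : ebar + θ • (zb - ebar) = θ • zb + (1 - θ) • ebar := by
          rw [smul_sub, sub_smul, one_smul]; abel
        rw [key]
        exact combo_pt hSv hzbS hebS hθ0 hθ1
      have := hη₁ _ hmem
      rw [map_smul, smul_eq_mul] at this
      linarith
    linarith
  have hbar : ∀ y ∈ S, η (y - ebar) ≤ 0 := by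
    intro y hy
    apply le_limit (a := η (y - ebar)) (x := η zb - η y)
    intro θ hθ0 hθ1
    have hmem : (θ • zb + (1 - θ) • y) - ebar ∈ O := by
      show ebar + ((θ • zb + (1 - θ) • y) - ebar) ∈ interior S
      rw [add_sub_cancel]
      exact combo_pt hSv hzbS hy hθ0 hθ1
    have h1 := hη₁ _ hmem
    rw [hδ0] at h1
    have h2 : η ((θ • zb + (1 - θ) • y) - ebar)
        = η (y - ebar) + θ * (η zb - η y) := by
      simp only [map_sub, map_add, map_smul, smul_eq_mul]
      ring
    rw [h2] at h1
    linarith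
  have hzneg : η (zb - ebar) < 0 := by
    have := hη₁ _ hzbO
    rwa [hδ0] at this
  obtain ⟨c₁, c₂, hrepr⟩ := repr2 u ψ η hΔ
  have hc₁ : 0 ≤ c₁ := by
    have h0 : 0 ≤ η dr := by
      apply ge_limit (a := η dr) (x := η d11)
      intro s hs0 hs1
      have hmem : dr + s • d11 ∈ Q := by
        constructor
        · rw [map_add, map_smul, smul_eq_mul, hdru, hd11u]; linarith
        · rw [map_add, map_smul, smul_eq_mul, hdrψ, hd11ψ]; linarith
      have := hη₂ _ hmem
      rw [hδ0, map_add, map_smul, smul_eq_mul] at this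
      linarith
    have := hrepr dr
    rw [hdru, hdrψ] at this
    rw [this] at h0
    linarith
  have hc₂ : 0 ≤ c₂ := by
    have h0 : 0 ≤ η dc := by
      apply ge_limit (a := η dc) (x := η d11)
      intro s hs0 hs1
      have hmem : dc + s • d11 ∈ Q := by
        constructor
        · rw [map_add, map_smul, smul_eq_mul, hdcu, hd11u]; linarith
        · rw [map_add, map_smul, smul_eq_mul, hdcψ, hd11ψ]; linarith
      have := hη₂ _ hmem
      rw [hδ0, map_add, map_smul, smul_eq_mul] at this
      linarith
    have := hrepr dc
    rw [hdcu, hdcψ] at this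
    rw [this] at h0
    linarith
  exact ⟨c₁, c₂, η, hc₁, hc₂, hrepr, hbar, hzneg⟩

lemma cone_split (A B : Set P2) (hAv : Convex ℝ A) (hBv : Convex ℝ B)
    (zb : P2) (hzbA : zb ∈ interior A) (hzbB : zb ∈ interior B)
    (u : P2 →L[ℝ] ℝ) (hu : ∃ x, u x ≠ 0) (ebar : P2)
    (hebA : ebar ∈ A) (hebB : ebar ∈ B)
    (hmax : ∀ x, x ∈ A → x ∈ B → u x ≤ u ebar) :
    ∃ φ₁ φ₂ : P2 →L[ℝ] ℝ, (∀ x, φ₁ x + φ₂ x = u x) ∧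
      (∀ y ∈ A, φ₁ y ≤ φ₁ ebar) ∧ (∀ y ∈ B, φ₂ y ≤ φ₂ ebar) := by
  by_cases hA1 : ∀ y ∈ A, u y ≤ u ebar
  · exact ⟨u, 0, by simp, hA1, by simp⟩
  by_cases hB1 : ∀ y ∈ B, u y ≤ u ebar
  · exact ⟨0, u, by simp, by simp, hB1⟩
  push_neg at hA1 hB1
  obtain ⟨yA, hyA, huyA⟩ := hA1
  obtain ⟨yB, hyB, huyB⟩ := hB1
  -- the sets G₁ G₂
  set G₁ : Set P2 := interior A ∩ {x | u ebar < u x} with hG₁def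
  set G₂ : Set P2 := interior B ∩ {x | u ebar < u x} with hG₂def
  have hG₁o : IsOpen G₁ := isOpen_interior.inter (halfspace_open u _)
  have hG₂o : IsOpen G₂ := isOpen_interior.inter (halfspace_open u _)
  have hG₁v : Convex ℝ G₁ := hAv.interior.inter (halfspace_convex u _)
  have hG₂v : Convex ℝ G₂ := hBv.interior.inter (halfspace_convex u _)
  -- nonemptiness
  have hmkG : ∀ (S : Set P2), Convex ℝ S → zb ∈ interior S → ∀ y ∈ S, u ebar < u y →
      ∃ w, w ∈ interior S ∩ {x | u ebar < u x} := by
    intro S hSv hzbS y hyS huy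
    obtain ⟨θ, hθ0, hθ1, hθx⟩ := tiny (u y - u ebar) (u zb - u y) (by linarith)
    refine ⟨θ • zb + (1 - θ) • y, combo_pt hSv hzbS hyS hθ0 hθ1, ?_⟩
    have hval := combo_val u zb y θ
    have h3 : -(θ * |u zb - u y|) ≤ θ * (u zb - u y) := by
      have := neg_abs_le (u zb - u y)
      nlinarith
    simp only [mem_setOf_eq, hval]
    linarith
  obtain ⟨w₁, hw₁⟩ := hmkG A hAv hzbA yA hyA huyA
  obtain ⟨w₂, hw₂⟩ := hmkG B hBv hzbB yB hyB huyB
  have hdisj : Disjoint G₁ G₂ := by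
    rw [Set.disjoint_left]
    rintro x ⟨hxA, hxu⟩ ⟨hxB, _⟩
    exact absurd (hmax x (interior_subset hxA) (interior_subset hxB)) (not_le.2 hxu)
  obtain ⟨ψ, β, hψ₁, hψ₂⟩ := geometric_hahn_banach_open hG₁v hG₁o hG₂v hdisj
  -- (i) and (ii)
  have hi : ∀ y ∈ A, u ebar ≤ u y → ψ y ≤ β := by
    intro y hy huy
    apply le_limit (a := ψ y) (x := ψ w₁ - ψ y)
    intro θ hθ0 hθ1
    have hmem : θ • w₁ + (1 - θ) • y ∈ G₁ := by
      refine ⟨combo_pt hAv hw₁.1 hy hθ0 hθ1, ?_⟩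
      have hval := combo_val u w₁ y θ
      have hval2 : u ebar < u w₁ := hw₁.2
      simp only [mem_setOf_eq, hval]
      nlinarith
    have := hψ₁ _ hmem
    rwa [combo_val ψ w₁ y θ] at this
  have hii : ∀ y ∈ B, u ebar ≤ u y → β ≤ ψ y := by
    intro y hy huy
    apply ge_limit (a := ψ y) (x := ψ w₂ - ψ y)
    intro θ hθ0 hθ1
    have hmem : θ • w₂ + (1 - θ) • y ∈ G₂ := by
      refine ⟨combo_pt hBv hw₂.1 hy hθ0 hθ1, ?_⟩
      have hval := combo_val u w₂ y θ
      have hval2 : u ebar < u w₂ := hw₂.2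
      simp only [mem_setOf_eq, hval]
      nlinarith
    have := hψ₂ _ hmem
    rwa [combo_val ψ w₂ y θ] at this
  have hβe : ψ ebar = β := le_antisymm (hi ebar hebA le_rfl) (hii ebar hebB le_rfl)
  -- independence of u and ψ
  have hΔ : u e1 * ψ e2 - u e2 * ψ e1 ≠ 0 := by
    intro h0
    rcases dep2 u ψ h0 with h | ⟨lam, hlam⟩
    · obtain ⟨x, hx⟩ := hu; exact hx (h x)
    · rcases lt_trichotomy lam 0 with hl | hl | hl
      · have h1 := hii yB hyB (le_of_lt huyB)
        rw [hlam yB, ← hβe, hlam ebar] at h1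
        nlinarith [mul_lt_mul_of_neg_left huyB hl]
      · have hz1 : ψ w₁ < β := hψ₁ w₁ hw₁
        have hz2 : β ≤ ψ w₂ := hψ₂ w₂ hw₂
        rw [hlam w₁, hl] at hz1
        rw [hlam w₂, hl] at hz2
        simp at hz1 hz2
        linarith
      · have h1 := hi yA hyA (le_of_lt huyA)
        rw [hlam yA, ← hβe, hlam ebar] at h1
        nlinarith [mul_lt_mul_of_pos_left huyA hl]
  -- a generic one-sided construction
  obtain ⟨c₁, c₂, η, hc₁, hc₂, hrepr, hbarA, hznegA⟩ :=
    side_normal A hAv zb hzbA ebar hebA u ψ β hΔ hβe hi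
  obtain ⟨c₁', c₂'', η', hc₁', hc₂'', hrepr', hbarB, hznegB⟩ :=
    side_normal B hBv zb hzbB ebar hebB u (-ψ) (-β)
      (by simp only [ContinuousLinearMap.neg_apply]; intro h; apply hΔ; linarith)
      (by simp [hβe])
      (by intro y hy huy; simp only [ContinuousLinearMap.neg_apply, neg_le_neg_iff]
          exact hii y hy huy)
  set c₂' : ℝ := -c₂'' with hc₂'def
  have hc₂'le : c₂' ≤ 0 := by simp [hc₂'def]; linarith
  have hrepr'' : ∀ d, η' d = c₁' * u d + c₂' * ψ d := by
    intro d
    have := hrepr' d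
    simp only [ContinuousLinearMap.neg_apply] at this
    rw [this, hc₂'def]; ring
  clear hrepr'
  -- final assembly
  by_cases hc2z : c₂ = 0
  · have hc₁pos : 0 < c₁ := by
      rcases lt_or_eq_of_le hc₁ with h | h
      · exact h
      · exfalso
        have := hrepr (zb - ebar)
        rw [← h, hc2z] at this
        simp only [zero_mul, add_zero, zero_add] at this
        linarith
    refine ⟨(1 / c₁) • η, 0, ?_, ?_, by simp⟩
    · intro x
      have := hrepr x
      simp only [ContinuousLinearMap.smul_apply, smul_eq_mul,
        ContinuousLinearMap.zero_apply]
      rw [this, hc2z]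
      field_simp
      ring
    · intro y hy
      have h1 : η y - η ebar ≤ 0 := by
        have := hbarA y hy; rwa [map_sub] at this
      simp only [ContinuousLinearMap.smul_apply, smul_eq_mul]
      have h2 : (0:ℝ) ≤ 1 / c₁ := le_of_lt (one_div_pos.2 hc₁pos)
      nlinarith
  by_cases hc2z' : c₂' = 0
  · have hc₁pos : 0 < c₁' := by
      rcases lt_or_eq_of_le hc₁' with h | h
      · exact h
      · exfalso
        have := hrepr'' (zb - ebar)
        rw [← h, hc2z'] at this
        simp only [zero_mul, add_zero, zero_add] at this
        linarith
    refine ⟨0, (1 / c₁') • η', ?_, by simp, ?_⟩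
    · intro x
      have := hrepr'' x
      simp only [ContinuousLinearMap.smul_apply, smul_eq_mul,
        ContinuousLinearMap.zero_apply]
      rw [this, hc2z']
      field_simp
      ring
    · intro y hy
      have h1 : η' y - η' ebar ≤ 0 := by
        have := hbarB y hy; rwa [map_sub] at this
      simp only [ContinuousLinearMap.smul_apply, smul_eq_mul]
      have h2 : (0:ℝ) ≤ 1 / c₁' := le_of_lt (one_div_pos.2 hc₁pos)
      nlinarith
  -- now c₂ > 0, c₂' < 0
  have hc₂pos : 0 < c₂ := lt_of_le_of_ne hc₂ (Ne.symm hc2z)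
  have hc₂'neg : c₂' < 0 := lt_of_le_of_ne hc₂'le hc2z'
  set Δ' : ℝ := c₁ * (-c₂') + c₁' * c₂ with hΔ'def
  have hΔ'nn : 0 ≤ Δ' := by nlinarith
  by_cases hΔ'0 : Δ' = 0
  · exfalso
    have h1 : c₁ = 0 := by nlinarith
    have h2 : c₁' = 0 := by nlinarith
    have h3 := hrepr (zb - ebar)
    have h4 := hrepr'' (zb - ebar)
    rw [h1] at h3; rw [h2] at h4
    simp only [zero_mul, zero_add] at h3 h4
    have hψneg : ψ (zb - ebar) < 0 := by
      by_contra hcon; push_neg at hcon; nlinarith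
    have hpos : 0 < c₂' * ψ (zb - ebar) := mul_pos_of_neg_of_neg hc₂'neg hψneg
    linarith
  have hΔ'pos : 0 < Δ' := lt_of_le_of_ne hΔ'nn (Ne.symm hΔ'0)
  refine ⟨((-c₂') / Δ') • η, (c₂ / Δ') • η', ?_, ?_, ?_⟩
  · intro x
    simp only [ContinuousLinearMap.smul_apply, smul_eq_mul]
    rw [hrepr x, hrepr'' x]
    field_simp
    ring
  · intro y hy
    have h1 : η y - η ebar ≤ 0 := by
      have := hbarA y hy; rwa [map_sub] at this
    simp only [ContinuousLinearMap.smul_apply, smul_eq_mul]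
    have h2 : (0:ℝ) ≤ (-c₂') / Δ' := div_nonneg (by linarith) (le_of_lt hΔ'pos)
    nlinarith
  · intro y hy
    have h1 : η' y - η' ebar ≤ 0 := by
      have := hbarB y hy; rwa [map_sub] at this
    simp only [ContinuousLinearMap.smul_apply, smul_eq_mul]
    have h2 : (0:ℝ) ≤ c₂ / Δ' := div_nonneg (by linarith) (le_of_lt hΔ'pos)
    nlinarith

end ConeSplit

section FStep

lemma fstep (C : Set P2) (hCv : Convex ℝ C) (hCc : IsCompact C) (hCs : ∀ x ∈ C, -x ∈ C)
    (ψ₁ ψ₂ u : P2 →L[ℝ] ℝ) (hsum : ∀ x, ψ₁ x + ψ₂ x = u x)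
    (a b f : P2) (ha : a ∈ C) (hb : b ∈ C) (hf : f ∈ C)
    (hmax1 : ∀ c ∈ C, ψ₁ c ≤ ψ₁ a) (hmax2 : ∀ c ∈ C, ψ₂ c ≤ ψ₂ b)
    (hmaxu : ∀ c ∈ C, u c ≤ u f)
    (hΔ : ψ₁ e1 * ψ₂ e2 - ψ₁ e2 * ψ₂ e1 ≠ 0)
    (z : P2) (hza : z - a ∈ C) (hzb : z - b ∈ C) : z - f ∈ C := by
  by_contra hzf
  obtain ⟨ω, r, hω₁, hω₂⟩ := geometric_hahn_banach_closed_point hCv hCc.isClosed hzf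
  obtain ⟨lam, mu, hωrepr⟩ := repr2 ψ₁ ψ₂ ω hΔ
  set h₁ : ℝ := ψ₁ a with hh₁
  set h₂ : ℝ := ψ₂ b with hh₂
  set M : ℝ := u f with hM
  set X : ℝ := ψ₁ f with hX
  have hψ₂f : ψ₂ f = M - X := by have := hsum f; linarith
  have hfb1 : ψ₁ b ≤ M - h₂ := by
    have h3 := hmaxu b hb
    have h4 := hsum b
    linarith
  have hfa2 : ψ₂ a ≤ M - h₁ := by
    have h3 := hmaxu a ha
    have h4 := hsum a
    linarith
  have hX1 : X ≤ h₁ := hmax1 f hf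
  have hX2 : M - h₂ ≤ X := by
    have := hmax2 f hf
    linarith
  have hz1b : ψ₁ z ≤ h₁ + ψ₁ b := by
    have := hmax1 _ hzb
    rw [map_sub] at this
    linarith
  have hz2a : ψ₂ z ≤ h₂ + ψ₂ a := by
    have := hmax2 _ hza
    rw [map_sub] at this
    linarith
  have hz1pos : 0 ≤ ψ₁ z := by
    have := hmax1 _ (hCs _ hza)
    rw [map_neg, map_sub] at this
    linarith
  have hz2pos : 0 ≤ ψ₂ z := by
    have := hmax2 _ (hCs _ hzb)
    rw [map_neg, map_sub] at this
    linarith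
  have hωz : ω (z - f) = lam * (ψ₁ z - X) + mu * (ψ₂ z - (M - X)) := by
    rw [hωrepr (z - f), map_sub, map_sub, hψ₂f, ← hX]
  rcases le_or_gt 0 lam with hlam | hlam <;> rcases le_or_gt 0 mu with hmu | hmu
  · -- both nonneg
    have hMh : M - h₂ ≤ h₁ := le_trans hX2 hX1
    obtain ⟨t, ht0, ht1, hkey⟩ :
        ∃ t : ℝ, 0 ≤ t ∧ t ≤ 1 ∧ (1 - t) * h₁ + t * (M - h₂) = X := by
      by_cases hdeg : h₁ - (M - h₂) = 0
      · refine ⟨0, le_rfl, zero_le_one, ?_⟩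
        have : X = h₁ := le_antisymm hX1 (by linarith)
        rw [this]; ring
      · refine ⟨(h₁ - X) / (h₁ - (M - h₂)), ?_, ?_, ?_⟩
        · apply div_nonneg (by linarith)
          rcases lt_or_eq_of_le hMh with h | h
          · linarith
          · exact absurd (by linarith) hdeg
        · rw [div_le_one_iff]
          left
          constructor
          · rcases lt_or_eq_of_le hMh with h | h
            · linarith
            · exact absurd (by linarith) hdeg
          · linarith
        · field_simp
          ring
    set p : P2 := t • a + (1 - t) • b with hp
    have hpC : p ∈ C := hCv ha hb ht0 (by linarith) (by ring)
    have hψ₁p : ψ₁ p = t * h₁ + (1 - t) * ψ₁ b := by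
      rw [hp]; simp only [map_add, map_smul, smul_eq_mul]
      rfl
    have hψ₂p : ψ₂ p = t * ψ₂ a + (1 - t) * h₂ := by
      rw [hp]; simp only [map_add, map_smul, smul_eq_mul]
      rfl
    have hωp : ω p = lam * (t * h₁ + (1 - t) * ψ₁ b) + mu * (t * ψ₂ a + (1 - t) * h₂) := by
      rw [hωrepr p, hψ₁p, hψ₂p]
    have hlampart : ψ₁ z - X ≤ t * h₁ + (1 - t) * ψ₁ b := by nlinarith
    have hmupart : ψ₂ z - (M - X) ≤ t * ψ₂ a + (1 - t) * h₂ := by nlinarith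
    have hle : ω (z - f) ≤ ω p := by
      rw [hωz, hωp]
      have e1 := mul_le_mul_of_nonneg_left hlampart hlam
      have e2 := mul_le_mul_of_nonneg_left hmupart hmu
      linarith
    have := hω₁ p hpC
    linarith
  · -- lam ≥ 0, mu < 0 : compare with z - b
    have hωzb : ω (z - b) = lam * (ψ₁ z - ψ₁ b) + mu * (ψ₂ z - h₂) := by
      rw [hωrepr (z - b), map_sub, map_sub, hh₂]
    have hle : ω (z - f) ≤ ω (z - b) := by
      rw [hωz, hωzb]
      nlinarith [mul_nonneg hlam (show (0:ℝ) ≤ X - ψ₁ b by linarith),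
        mul_nonneg (show (0:ℝ) ≤ -mu by linarith) (show (0:ℝ) ≤ h₂ - (M - X) by linarith)]
    have := hω₁ _ hzb
    linarith
  · -- lam < 0, mu ≥ 0 : compare with z - a
    have hωza : ω (z - a) = lam * (ψ₁ z - h₁) + mu * (ψ₂ z - ψ₂ a) := by
      rw [hωrepr (z - a), map_sub, map_sub, hh₁]
    have hle : ω (z - f) ≤ ω (z - a) := by
      rw [hωz, hωza]
      nlinarith [mul_nonneg (show (0:ℝ) ≤ -lam by linarith) (show (0:ℝ) ≤ h₁ - X by linarith),
        mul_nonneg hmu (show (0:ℝ) ≤ (M - X) - ψ₂ a by linarith)]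
    have := hω₁ _ hza
    linarith
  · -- both negative
    have hωzneg : ω z ≤ 0 := by
      rw [hωrepr z]
      nlinarith
    have hnf := hω₁ _ (hCs f hf)
    rw [map_neg] at hnf
    rw [map_sub] at hω₂
    linarith

end FStep

section LemH

lemma lemH (C : Set P2) (hCc : IsCompact C) (hCv : Convex ℝ C) (hCs : ∀ x ∈ C, -x ∈ C)
    (q q' zb : P2) (hzbq : zb ∈ interior (tr C q)) (hzbq' : zb ∈ interior (tr C q'))
    (u : P2 →L[ℝ] ℝ) (hu : ∃ x, u x ≠ 0)
    (cu : P2) (hcu : cu ∈ C) (hcumax : ∀ c ∈ C, u c ≤ u cu) :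
    ∃ x₀ ζ : P2, (q - x₀ ∈ C) ∧ (q' - x₀ ∈ C) ∧
      (∀ x : P2, q - x ∈ C → q' - x ∈ C → ζ - x ∈ C) ∧ u ζ = u x₀ + u cu := by
  set A : Set P2 := tr C q with hA
  set B : Set P2 := tr C q' with hB
  have hAv : Convex ℝ A := hCv.translate q
  have hBv : Convex ℝ B := hCv.translate q'
  have hAc : IsCompact A := hCc.image (continuous_const.add continuous_id)
  have hBc : IsCompact B := hCc.image (continuous_const.add continuous_id)
  have hEne : (A ∩ B).Nonempty := ⟨zb, interior_subset hzbq, interior_subset hzbq'⟩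
  obtain ⟨ebar, hebE, hebmax⟩ :=
    (hAc.inter_right hBc.isClosed).exists_isMaxOn hEne u.continuous.continuousOn
  have hmax : ∀ x, x ∈ A → x ∈ B → u x ≤ u ebar := fun x hxa hxb =>
    isMaxOn_iff.1 hebmax x ⟨hxa, hxb⟩
  obtain ⟨φ₁, φ₂, hsum, hbA, hbB⟩ :=
    cone_split A B hAv hBv zb hzbq hzbq' u hu ebar hebE.1 hebE.2 hmax
  set avec : P2 := ebar - q with havecdef
  set bvec : P2 := ebar - q' with hbvecdef
  have havec : avec ∈ C := mem_tr.1 hebE.1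
  have hbvec : bvec ∈ C := mem_tr.1 hebE.2
  have hmax1 : ∀ c ∈ C, φ₁ c ≤ φ₁ avec := by
    intro c hc
    have hqc : q + c ∈ A := mem_tr.2 (by simpa using hc)
    have h := hbA (q + c) hqc
    rw [map_add] at h
    rw [havecdef, map_sub]
    linarith
  have hmax2 : ∀ c ∈ C, φ₂ c ≤ φ₂ bvec := by
    intro c hc
    have hqc : q' + c ∈ B := mem_tr.2 (by simpa using hc)
    have h := hbB (q' + c) hqc
    rw [map_add] at h
    rw [hbvecdef, map_sub]
    linarith
  obtain ⟨fp, hfpC, hfpmax, hincl⟩ : ∃ fp, fp ∈ C ∧ (∀ c ∈ C, u c ≤ u fp) ∧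
      ∀ z : P2, z - avec ∈ C → z - bvec ∈ C → z - fp ∈ C := by
    by_cases hΔφ : φ₁ e1 * φ₂ e2 - φ₁ e2 * φ₂ e1 = 0
    · rcases dep2 φ₁ φ₂ hΔφ with hz | ⟨lam, hlam⟩
      · refine ⟨bvec, hbvec, ?_, fun z h1 h2 => h2⟩
        intro c hc
        have h1 := hsum c
        have h2 := hsum bvec
        have h3 := hmax2 c hc
        rw [hz c] at h1
        rw [hz bvec] at h2
        linarith
      · have husum : ∀ x, u x = (1 + lam) * φ₁ x := by
          intro x
          have := hsum x
          rw [hlam x] at this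
          linarith
        rcases lt_trichotomy (1 + lam) 0 with hl | hl | hl
        · refine ⟨bvec, hbvec, ?_, fun z h1 h2 => h2⟩
          intro c hc
          have h3 := hmax2 c hc
          rw [hlam c, hlam bvec] at h3
          have hlamneg : lam < 0 := by linarith
          have h4 : φ₁ bvec ≤ φ₁ c := by nlinarith
          rw [husum c, husum bvec]
          nlinarith
        · exfalso
          obtain ⟨x, hx⟩ := hu
          exact hx (by rw [husum x, hl]; ring)
        · refine ⟨avec, havec, ?_, fun z h1 h2 => h1⟩
          intro c hc
          have h3 := hmax1 c hc
          rw [husum c, husum avec]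
          nlinarith
    · exact ⟨cu, hcu, hcumax,
        fstep C hCv hCc hCs φ₁ φ₂ u hsum avec bvec cu havec hbvec hcu hmax1 hmax2 hcumax hΔφ⟩
  refine ⟨q + q' - ebar, q + q' - ebar + fp, ?_, ?_, ?_, ?_⟩
  · have : q - (q + q' - ebar) = bvec := by rw [hbvecdef]; abel
    rw [this]; exact hbvec
  · have : q' - (q + q' - ebar) = avec := by rw [havecdef]; abel
    rw [this]; exact havec
  · intro x h1 h2
    set z : P2 := ebar - q - q' + x with hzdef
    have hz1 : z - avec ∈ C := by
      have : z - avec = -(q' - x) := by rw [hzdef, havecdef]; abel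
      rw [this]; exact hCs _ h2
    have hz2 : z - bvec ∈ C := by
      have : z - bvec = -(q - x) := by rw [hzdef, hbvecdef]; abel
      rw [this]; exact hCs _ h1
    have hz3 := hincl z hz1 hz2
    have : q + q' - ebar + fp - x = -(z - fp) := by rw [hzdef]; abel
    rw [this]; exact hCs _ hz3
  · rw [map_add]
    have : u fp = u cu := le_antisymm (hcumax fp hfpC) (hfpmax cu hcu)
    rw [this]

end LemH

section CFacts

variable {C : Set P2}

lemma neg_image_eq (hCs : ∀ x ∈ C, -x ∈ C) : Neg.neg '' C = C := by
  ext z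
  constructor
  · rintro ⟨w, hw, rfl⟩; exact hCs w hw
  · intro hz; exact ⟨-z, hCs z hz, neg_neg z⟩

lemma neg_mem_interior (hCs : ∀ x ∈ C, -x ∈ C) {v : P2} (hv : v ∈ interior C) :
    -v ∈ interior C := by
  have h1 : Neg.neg '' interior C = interior (Neg.neg '' C) :=
    (Homeomorph.neg P2).image_interior C
  rw [neg_image_eq hCs] at h1
  rw [← h1]
  exact ⟨v, hv, rfl⟩

lemma zero_mem_interior (hCv : Convex ℝ C) (hCi : (interior C).Nonempty)
    (hCs : ∀ x ∈ C, -x ∈ C) : (0 : P2) ∈ interior C := by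
  obtain ⟨x, hx⟩ := hCi
  have hnx : -x ∈ interior C := neg_mem_interior hCs hx
  have := hCv.interior hx hnx (by norm_num : (0:ℝ) ≤ 1/2) (by norm_num : (0:ℝ) ≤ 1/2)
    (by norm_num)
  rwa [smul_neg, add_neg_cancel] at this

lemma mem_interior_tr {p v : P2} (hv : v ∈ interior C) : p + v ∈ interior (tr C p) := by
  have h1 : (fun x => p + x) '' interior C = interior ((fun x => p + x) '' C) :=
    (Homeomorph.addLeft p).image_interior C
  have h2 : interior (tr C p) = (fun x => p + x) '' interior C := by
    rw [h1]; rfl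
  rw [h2]
  exact ⟨v, hv, rfl⟩

end CFacts

section MainSep

lemma exists_sep_translate (C K : Set P2)
    (hCc : IsCompact C) (hCv : Convex ℝ C) (hCi : (interior C).Nonempty)
    (hCs : ∀ x ∈ C, -x ∈ C)
    (hK : IsClosed K) (hne : K ≠ Set.univ)
    (hcc : ∀ p ∈ K, ∀ q ∈ K, spindle C p q ⊆ K) (hKne : K.Nonempty)
    (y : P2) (hy : y ∉ K) :
    ∃ x : P2, (∀ p ∈ K, p - x ∈ C) ∧ y - x ∉ C := by
  have h0i : (0:P2) ∈ interior C := zero_mem_interior hCv hCi hCs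
  have h0 : (0:P2) ∈ C := interior_subset h0i
  -- any two points of K share a translate
  have share : ∀ p ∈ K, ∀ r ∈ K, ∃ x, p - x ∈ C ∧ r - x ∈ C := by
    intro p hp r hr
    by_contra hcon
    push_neg at hcon
    have hsp : spindle C p r = univ := by
      rw [spindle]
      have hidx : {x : P2 | p ∈ tr C x ∧ r ∈ tr C x} = ∅ := by
        ext x
        simp only [mem_setOf_eq, mem_empty_iff_false, iff_false, not_and]
        intro h1 h2
        exact (hcon x (mem_tr.1 h1)) (mem_tr.1 h2)
      rw [hidx]
      simp
    have := hcc p hp r hr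
    rw [hsp] at this
    exact hne (eq_univ_of_univ_subset this)
  -- K is convex
  have hKv : Convex ℝ K := by
    intro p hp r hr a b ha hb hab
    apply hcc p hp r hr
    refine mem_iInter₂.2 fun x hx => ?_
    exact (hCv.translate x) hx.1 hx.2 ha hb hab
  -- C is bounded
  obtain ⟨R, hR⟩ := hCc.isBounded.subset_closedBall (0:P2)
  have hnormC : ∀ v ∈ C, ‖v‖ ≤ R := by
    intro v hv
    have := hR hv
    rwa [Metric.mem_closedBall, dist_zero_right] at this
  -- K is compact
  obtain ⟨q₀, hq₀⟩ := hKne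
  have hKc : IsCompact K := by
    rw [Metric.isCompact_iff_isClosed_bounded]
    refine ⟨hK, ?_⟩
    have : K ⊆ Metric.closedBall q₀ (2*R) := by
      intro p hp
      obtain ⟨x, hpx, hq₀x⟩ := share p hp q₀ hq₀
      rw [Metric.mem_closedBall, dist_eq_norm]
      have : p - q₀ = (p - x) - (q₀ - x) := by abel
      rw [this]
      calc ‖(p - x) - (q₀ - x)‖ ≤ ‖p - x‖ + ‖q₀ - x‖ := norm_sub_le _ _
        _ ≤ 2*R := by
            have := hnormC _ hpx
            have := hnormC _ hq₀x
            linarith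
    exact Metric.isBounded_closedBall.subset this
  -- separate y from K
  obtain ⟨f, β, hfK, hfy⟩ := geometric_hahn_banach_closed_point hKv hK hy
  set d0 : P2 := y - q₀ with hd0
  have hfd0 : 0 < f d0 := by
    rw [hd0, map_sub]
    have := hfK q₀ hq₀
    linarith
  -- sup of f over K
  set c : ℝ := sSup (f '' K) with hc
  have hbdd : BddAbove (f '' K) := (hKc.image f.continuous).bddAbove
  have hKimne : (f '' K).Nonempty := ⟨f q₀, q₀, hq₀, rfl⟩
  have hcle : ∀ p ∈ K, f p ≤ c := fun p hp => le_csSup hbdd ⟨p, hp, rfl⟩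
  have hcβ : c ≤ β := csSup_le hKimne (by rintro v ⟨p, hp, rfl⟩; exact le_of_lt (hfK p hp))
  -- max of f on C
  obtain ⟨cu, hcu, hcumax'⟩ := hCc.exists_isMaxOn ⟨0, h0⟩ f.continuous.continuousOn
  have hcumax : ∀ v ∈ C, f v ≤ f cu := isMaxOn_iff.1 hcumax'
  set M : ℝ := f cu with hM
  have hMpos : 0 < M := by
    obtain ⟨ε, hε, hball⟩ := Metric.mem_nhds_iff.1 (mem_interior_iff_mem_nhds.1 h0i)
    have hd0ne : d0 ≠ 0 := by
      intro h
      rw [h] at hfd0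
      simp at hfd0
    set v : P2 := (ε / (2 * ‖d0‖)) • d0 with hv
    have hvC : v ∈ C := by
      apply hball
      rw [Metric.mem_ball, dist_zero_right, hv, norm_smul, Real.norm_eq_abs]
      have hn : 0 < ‖d0‖ := norm_pos_iff.2 hd0ne
      rw [abs_of_pos (show (0:ℝ) < ε / (2 * ‖d0‖) by positivity)]
      rw [div_mul_eq_mul_div, div_lt_iff₀ (by positivity)]
      nlinarith
    have hfv : 0 < f v := by
      rw [hv, map_smul, smul_eq_mul]
      have hn : 0 < ‖d0‖ := norm_pos_iff.2 hd0ne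
      positivity
    have := hcumax v hvC
    linarith
  -- lower bound on f over K
  have hlow : ∀ p ∈ K, c ≤ f p + 2*M := by
    intro p hp
    apply csSup_le hKimne
    rintro v ⟨r, hr, rfl⟩
    obtain ⟨x, hpx, hrx⟩ := share p hp r hr
    have h1 : f (r - x) ≤ M := hcumax _ hrx
    have h2 : f (-(p - x)) ≤ M := hcumax _ (hCs _ hpx)
    rw [map_sub] at h1
    rw [map_neg, map_sub] at h2
    linarith
  -- point of C with prescribed f-value
  have valC : ∀ v : ℝ, -M ≤ v → v ≤ M → ∃ cc ∈ C, f cc = v := by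
    intro v hv1 hv2
    refine ⟨((M + v)/(2*M)) • cu + ((M - v)/(2*M)) • (-cu), ?_, ?_⟩
    · apply hCv hcu (hCs cu hcu)
      · apply div_nonneg (by linarith) (by linarith)
      · apply div_nonneg (by linarith) (by linarith)
      · field_simp
        ring
    · rw [map_add, map_smul, map_smul, map_neg, smul_eq_mul, smul_eq_mul, ← hM]
      field_simp
      ring
  -- the line {f = c - M}
  set dvec : P2 := (-(f e2), f e1) with hdvec
  have hd1 : dvec.1 = -(f e2) := by rw [hdvec]
  have hd2 : dvec.2 = f e1 := by rw [hdvec]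
  have hfdvec : f dvec = 0 := by
    rw [clm_eval f dvec, hd1, hd2]
    ring
  have hwor : f e1 ≠ 0 ∨ f e2 ≠ 0 := by
    by_contra hcon
    push_neg at hcon
    have h2 := clm_eval f d0
    rw [hcon.1, hcon.2] at h2
    simp at h2
    rw [h2] at hfd0
    exact lt_irrefl _ hfd0
  have hdvecnorm : 0 < ‖dvec‖ := by
    rw [norm_pos_iff]
    intro h
    rw [hdvec, Prod.ext_iff] at h
    simp at h
    rcases hwor with h' | h'
    · exact h' h.2
    · exact h' h.1
  have hker : ∀ x : P2, f x = 0 → ∃ t : ℝ, x = t • dvec := by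
    intro x hx
    rw [clm_eval f x] at hx
    rcases hwor with h | h
    · refine ⟨x.2 / f e1, ?_⟩
      rw [Prod.ext_iff]
      refine ⟨?_, ?_⟩
      · rw [Prod.smul_fst, hd1, smul_eq_mul]
        field_simp
        linear_combination hx
      · rw [Prod.smul_snd, hd2, smul_eq_mul]
        field_simp
    · refine ⟨-x.1 / f e2, ?_⟩
      rw [Prod.ext_iff]
      refine ⟨?_, ?_⟩
      · rw [Prod.smul_fst, hd1, smul_eq_mul]
        field_simp
      · rw [Prod.smul_snd, hd2, smul_eq_mul]
        field_simp
        linarith [hx]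
  set p₀ : P2 := ((c - M) / f d0) • d0 with hp₀
  have hfp₀ : f p₀ = c - M := by
    rw [hp₀, map_smul, smul_eq_mul]
    field_simp
  -- the interval families
  set T : P2 → Set ℝ := fun p => {t : ℝ | p₀ + t • dvec - p ∈ C} with hTdef
  have hTmem : ∀ p t, t ∈ T p ↔ p₀ + t • dvec - p ∈ C := fun p t => Iff.rfl
  have hTclosed : ∀ p, IsClosed (T p) := by
    intro p
    have hcont : Continuous (fun t : ℝ => p₀ + t • dvec - p) := by
      apply Continuous.sub _ continuous_const
      exact continuous_const.add (continuous_id.smul continuous_const)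
    exact IsClosed.preimage hcont hCc.isClosed
  have hTconv : ∀ p, Convex ℝ (T p) := by
    intro p t₁ h₁ t₂ h₂ a b ha hb hab
    have key : p₀ + (a * t₁ + b * t₂) • dvec - p
        = a • (p₀ + t₁ • dvec - p) + b • (p₀ + t₂ • dvec - p) := by
      rw [Prod.ext_iff]
      constructor
      · simp only [Prod.fst_add, Prod.fst_sub, Prod.smul_fst, smul_eq_mul]
        linear_combination (p.1 - p₀.1) * hab
      · simp only [Prod.snd_add, Prod.snd_sub, Prod.smul_snd, smul_eq_mul]
        linear_combination (p.2 - p₀.2) * hab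
    show p₀ + (a • t₁ + b • t₂) • dvec - p ∈ C
    rw [smul_eq_mul, smul_eq_mul, key]
    exact hCv h₁ h₂ ha hb hab
  have hTne : ∀ p ∈ K, (T p).Nonempty := by
    intro p hp
    obtain ⟨cc, hccC, hccval⟩ := valC (c - M - f p) (by have := hcle p hp; linarith)
      (by have := hlow p hp; linarith)
    have hfval : f (p + cc - p₀) = 0 := by
      rw [map_sub, map_add, hccval, hfp₀]
      ring
    obtain ⟨t, ht⟩ := hker _ hfval
    refine ⟨t, ?_⟩
    rw [hTmem]
    have : p₀ + t • dvec - p = cc := by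
      rw [← ht]; abel
    rw [this]
    exact hccC
  have hTsub : ∀ p, T p ⊆ Icc (-((R + ‖p₀ - p‖)/‖dvec‖)) ((R + ‖p₀ - p‖)/‖dvec‖) := by
    intro p t ht
    rw [hTmem] at ht
    have h1 : ‖p₀ + t • dvec - p‖ ≤ R := hnormC _ ht
    have h2 : ‖t • dvec‖ ≤ R + ‖p₀ - p‖ := by
      have : t • dvec = (p₀ + t • dvec - p) - (p₀ - p) := by abel
      rw [this]
      calc ‖(p₀ + t • dvec - p) - (p₀ - p)‖ ≤ ‖p₀ + t • dvec - p‖ + ‖p₀ - p‖ :=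
            norm_sub_le _ _
        _ ≤ R + ‖p₀ - p‖ := by linarith
    rw [norm_smul] at h2
    have h3 : |t| ≤ (R + ‖p₀ - p‖)/‖dvec‖ := by
      rw [le_div_iff₀ hdvecnorm]
      exact h2
    exact abs_le.1 h3
  have hTbddB : ∀ p, BddBelow (T p) := fun p => (bddBelow_Icc).mono (hTsub p)
  have hTbddA : ∀ p, BddAbove (T p) := fun p => (bddAbove_Icc).mono (hTsub p)
  -- pair condition for "fat" pairs
  have pairfat : ∀ p ∈ K, ∀ r ∈ K, ((1:ℝ)/2) • (r - p) ∈ interior C →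
      ∃ t, t ∈ T p ∩ T r := by
    intro p hp r hr hfat
    have hzb1 : ((1:ℝ)/2) • (p + r) ∈ interior (tr C p) := by
      have h1 := mem_interior_tr (p := p) hfat
      have heq : p + ((1:ℝ)/2) • (r - p) = ((1:ℝ)/2) • (p + r) := by
        rw [Prod.ext_iff]
        constructor
        · simp only [Prod.fst_add, Prod.smul_fst, Prod.fst_sub, smul_eq_mul]; ring
        · simp only [Prod.snd_add, Prod.smul_snd, Prod.snd_sub, smul_eq_mul]; ring
      rwa [heq] at h1
    have hzb2 : ((1:ℝ)/2) • (p + r) ∈ interior (tr C r) := by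
      have hneg : ((1:ℝ)/2) • (p - r) ∈ interior C := by
        have h1 := neg_mem_interior hCs hfat
        have heq : -(((1:ℝ)/2) • (r - p)) = ((1:ℝ)/2) • (p - r) := by
          rw [← smul_neg]; congr 1; abel
        rwa [heq] at h1
      have h1 := mem_interior_tr (p := r) hneg
      have heq : r + ((1:ℝ)/2) • (p - r) = ((1:ℝ)/2) • (p + r) := by
        rw [Prod.ext_iff]
        constructor
        · simp only [Prod.fst_add, Prod.smul_fst, Prod.fst_sub, smul_eq_mul]; ring
        · simp only [Prod.snd_add, Prod.smul_snd, Prod.snd_sub, smul_eq_mul]; ring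
      rwa [heq] at h1
    obtain ⟨xm, ζm, hxm1, hxm2, hspm, hvalm⟩ := lemH C hCc hCv hCs p r _ hzb1 hzb2 f
      ⟨d0, ne_of_gt hfd0⟩ cu hcu hcumax
    have hζmK : ζm ∈ K := by
      apply hcc p hp r hr
      refine mem_iInter₂.2 fun x hx => ?_
      exact mem_tr.2 (hspm x (mem_tr.1 hx.1) (mem_tr.1 hx.2))
    have hfm : f xm ≤ c - M := by
      have h1 := hcle _ hζmK
      rw [hvalm, ← hM] at h1
      linarith
    obtain ⟨xp, ζp, hxp1, hxp2, hspp, hvalp⟩ := lemH C hCc hCv hCs p r _ hzb1 hzb2 (-f)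
      ⟨d0, by simpa using ne_of_gt hfd0⟩ (-cu) (hCs cu hcu)
      (fun v hv => by
        have h1 := hcumax (-v) (hCs v hv)
        simp only [ContinuousLinearMap.neg_apply, map_neg] at *
        linarith)
    have hζpK : ζp ∈ K := by
      apply hcc p hp r hr
      refine mem_iInter₂.2 fun x hx => ?_
      exact mem_tr.2 (hspp x (mem_tr.1 hx.1) (mem_tr.1 hx.2))
    have hfp : c - M ≤ f xp := by
      have h1 := hlow _ hζpK
      simp only [ContinuousLinearMap.neg_apply, map_neg, neg_neg] at hvalp
      -- hvalp : -(f ζp) = -(f xp) + f cu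
      rw [← hM] at hvalp
      linarith
    obtain ⟨s, hs0, hs1, hskey⟩ : ∃ s : ℝ, 0 ≤ s ∧ s ≤ 1 ∧
        f ((1-s) • xm + s • xp) = c - M := by
      by_cases heq : f xp - f xm = 0
      · refine ⟨0, le_rfl, zero_le_one, ?_⟩
        rw [map_add, map_smul, map_smul, smul_eq_mul, smul_eq_mul]
        have hxmeq : f xm = c - M := by linarith
        rw [hxmeq]
        ring
      · have hpos : 0 < f xp - f xm := lt_of_le_of_ne (by linarith) (Ne.symm heq)
        refine ⟨(c - M - f xm)/(f xp - f xm), div_nonneg (by linarith) (le_of_lt hpos),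
          ?_, ?_⟩
        · rw [div_le_one hpos]; linarith
        · rw [map_add, map_smul, map_smul, smul_eq_mul, smul_eq_mul]
          field_simp
          ring
    set xt : P2 := (1-s) • xm + s • xp with hxt
    have hDp : p - xt ∈ C := by
      have key : p - xt = (1-s) • (p - xm) + s • (p - xp) := by
        rw [hxt, Prod.ext_iff]
        constructor
        · simp only [Prod.fst_add, Prod.smul_fst, Prod.fst_sub, smul_eq_mul]; ring
        · simp only [Prod.snd_add, Prod.smul_snd, Prod.snd_sub, smul_eq_mul]; ring
      rw [key]
      exact hCv hxm1 hxp1 (by linarith) hs0 (by ring)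
    have hDr : r - xt ∈ C := by
      have key : r - xt = (1-s) • (r - xm) + s • (r - xp) := by
        rw [hxt, Prod.ext_iff]
        constructor
        · simp only [Prod.fst_add, Prod.smul_fst, Prod.fst_sub, smul_eq_mul]; ring
        · simp only [Prod.snd_add, Prod.smul_snd, Prod.snd_sub, smul_eq_mul]; ring
      rw [key]
      exact hCv hxm2 hxp2 (by linarith) hs0 (by ring)
    have hfxt0 : f (xt - p₀) = 0 := by
      rw [map_sub, hfp₀, hxt, hskey]
      ring
    obtain ⟨t, ht⟩ := hker _ hfxt0
    refine ⟨t, ?_, ?_⟩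
    · rw [hTmem]
      have heq2 : p₀ + t • dvec - p = xt - p := by rw [← ht]; abel
      rw [heq2]
      have h2 := hCs _ hDp
      rwa [neg_sub] at h2
    · rw [hTmem]
      have heq2 : p₀ + t • dvec - r = xt - r := by rw [← ht]; abel
      rw [heq2]
      have h2 := hCs _ hDr
      rwa [neg_sub] at h2
  -- pair condition in general, by approximation
  have pairall : ∀ p ∈ K, ∀ r ∈ K, ∃ t, t ∈ T p ∩ T r := by
    intro p hp r hr
    have hmC : ((1:ℝ)/2) • (r - p) ∈ C := by
      obtain ⟨x, hpx, hrx⟩ := share p hp r hr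
      have h1 : ((1:ℝ)/2) • (r - x) + ((1:ℝ)/2) • (-(p - x)) ∈ C :=
        hCv hrx (hCs _ hpx) (by norm_num) (by norm_num) (by norm_num)
      have heq : ((1:ℝ)/2) • (r - x) + ((1:ℝ)/2) • (-(p - x)) = ((1:ℝ)/2) • (r - p) := by
        rw [Prod.ext_iff]
        constructor
        · simp only [Prod.fst_add, Prod.smul_fst, Prod.fst_sub, Prod.fst_neg, smul_eq_mul]
          ring
        · simp only [Prod.snd_add, Prod.smul_snd, Prod.snd_sub, Prod.snd_neg, smul_eq_mul]
          ring
      rwa [heq] at h1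
    set θ : ℕ → ℝ := fun n => 1 - 1/(n+2) with hθ
    have hθmem : ∀ n : ℕ, 0 ≤ θ n ∧ θ n < 1 := by
      intro n
      constructor
      · have h1 : (1:ℝ)/(n+2) ≤ 1 := by
          rw [div_le_one (by positivity)]
          have : (0:ℝ) ≤ (n:ℝ) := Nat.cast_nonneg n
          linarith
        simp only [hθ]
        linarith
      · have h1 : (0:ℝ) < 1/(n+2) := by positivity
        simp only [hθ]
        linarith
    set rseq : ℕ → P2 := fun n => p + (θ n) • (r - p) with hrseq
    have hrseqK : ∀ n, rseq n ∈ K := by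
      intro n
      have h1 : (1 - θ n) • p + (θ n) • r ∈ K :=
        hKv hp hr (by linarith [(hθmem n).2]) (hθmem n).1 (by ring)
      have heq : (1 - θ n) • p + (θ n) • r = rseq n := by
        simp only [hrseq]
        rw [Prod.ext_iff]
        constructor
        · simp only [Prod.fst_add, Prod.smul_fst, Prod.fst_sub, smul_eq_mul]; ring
        · simp only [Prod.snd_add, Prod.smul_snd, Prod.snd_sub, smul_eq_mul]; ring
      rwa [heq] at h1
    have hrfat : ∀ n, ((1:ℝ)/2) • (rseq n - p) ∈ interior C := by
      intro n
      have heq : ((1:ℝ)/2) • (rseq n - p)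
          = (1 - θ n) • (0:P2) + (θ n) • (((1:ℝ)/2) • (r - p)) := by
        simp only [hrseq, smul_zero, zero_add]
        rw [Prod.ext_iff]
        constructor
        · simp only [Prod.smul_fst, Prod.fst_sub, Prod.fst_add, smul_eq_mul]; ring
        · simp only [Prod.smul_snd, Prod.snd_sub, Prod.snd_add, smul_eq_mul]; ring
      rw [heq]
      exact hCv.combo_interior_closure_mem_interior h0i (subset_closure hmC)
        (by linarith [(hθmem n).2]) (hθmem n).1 (by ring)
    have hchoice : ∀ n, ∃ t, t ∈ T p ∩ T (rseq n) := fun n =>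
      pairfat p hp (rseq n) (hrseqK n) (hrfat n)
    choose tseq htseq using hchoice
    have hIcc : ∀ n, tseq n ∈
        Icc (-((R + ‖p₀ - p‖)/‖dvec‖)) ((R + ‖p₀ - p‖)/‖dvec‖) :=
      fun n => hTsub p ((htseq n).1)
    obtain ⟨t₀, ht₀mem, φ, hφmono, hφtend⟩ := (isCompact_Icc).tendsto_subseq hIcc
    have ht₀p : t₀ ∈ T p := (hTclosed p).mem_of_tendsto hφtend
      (Filter.Eventually.of_forall fun n => (htseq (φ n)).1)
    have hθtend : Filter.Tendsto (fun n : ℕ => θ n) Filter.atTop (nhds 1) := by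
      have h1 : Filter.Tendsto (fun n : ℕ => ((n:ℝ) + 2)) Filter.atTop Filter.atTop :=
        Filter.tendsto_atTop_add_const_right _ 2 tendsto_natCast_atTop_atTop
      have h2 := h1.inv_tendsto_atTop
      have h3 : Filter.Tendsto (fun n : ℕ => 1 - ((n:ℝ)+2)⁻¹) Filter.atTop (nhds (1 - 0)) :=
        tendsto_const_nhds.sub h2
      simp only [sub_zero] at h3
      have heq : (fun n : ℕ => θ n) = fun n : ℕ => 1 - ((n:ℝ)+2)⁻¹ := by
        funext n
        simp [hθ, one_div]
      rw [heq]
      exact h3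
    have hrtend : Filter.Tendsto (fun n => rseq (φ n)) Filter.atTop (nhds r) := by
      have h1 : Filter.Tendsto (fun n => θ (φ n)) Filter.atTop (nhds 1) :=
        hθtend.comp hφmono.tendsto_atTop
      have h2 : Filter.Tendsto (fun n => (θ (φ n)) • (r - p)) Filter.atTop
          (nhds ((1:ℝ) • (r - p))) := h1.smul_const (r - p)
      have h3 := (tendsto_const_nhds (x := p)).add h2
      rw [one_smul] at h3
      have heq : p + (r - p) = r := by abel
      rw [heq] at h3
      exact h3
    have ht₀r : t₀ ∈ T r := by
      rw [hTmem]
      have hvt : Filter.Tendsto (fun n => p₀ + (tseq (φ n)) • dvec - rseq (φ n))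
          Filter.atTop (nhds (p₀ + t₀ • dvec - r)) := by
        apply Filter.Tendsto.sub _ hrtend
        exact tendsto_const_nhds.add (hφtend.smul_const dvec)
      exact hCc.isClosed.mem_of_tendsto hvt
        (Filter.Eventually.of_forall fun n => (htseq (φ n)).2)
    exact ⟨t₀, ht₀p, ht₀r⟩
  -- 1-dimensional Helly gluing
  have haMem : ∀ p ∈ K, sInf (T p) ∈ T p := fun p hp =>
    (hTclosed p).csInf_mem (hTne p hp) (hTbddB p)
  have hbMem : ∀ p ∈ K, sSup (T p) ∈ T p := fun p hp =>
    (hTclosed p).csSup_mem (hTne p hp) (hTbddA p)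
  have hpair : ∀ p ∈ K, ∀ r ∈ K, sInf (T p) ≤ sSup (T r) := by
    intro p hp r hr
    obtain ⟨t, htp, htr⟩ := pairall p hp r hr
    exact le_trans (csInf_le (hTbddB p) htp) (le_csSup (hTbddA r) htr)
  set SA := (fun p => sInf (T p)) '' K with hSA
  have hSAne : SA.Nonempty := ⟨sInf (T q₀), q₀, hq₀, rfl⟩
  have hSAbdd : BddAbove SA := by
    refine ⟨sSup (T q₀), ?_⟩
    rintro v ⟨p, hp, rfl⟩
    exact hpair p hp q₀ hq₀
  set tstar := sSup SA with htstar
  have htstarT : ∀ p ∈ K, tstar ∈ T p := by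
    intro p hp
    have h1 : sInf (T p) ≤ tstar := le_csSup hSAbdd ⟨p, hp, rfl⟩
    have h2 : tstar ≤ sSup (T p) :=
      csSup_le hSAne (by rintro v ⟨r, hr, rfl⟩; exact hpair r hr p hp)
    exact (hTconv p).ordConnected.out (haMem p hp) (hbMem p hp) ⟨h1, h2⟩
  refine ⟨p₀ + tstar • dvec, ?_, ?_⟩
  · intro p hp
    have h1 := htstarT p hp
    rw [hTmem] at h1
    have h2 := hCs _ h1
    rwa [neg_sub] at h2
  · intro hyx
    have h1 : f (y - (p₀ + tstar • dvec)) ≤ M := hcumax _ hyx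
    simp only [map_sub, map_add, map_smul, smul_eq_mul, hfdvec, hfp₀, mul_zero,
      add_zero] at h1
    linarith

end MainSep

theorem stmt8 (C K : Set P2) (hC : SymDisk C) (hK : IsClosed K) (hne : K ≠ Set.univ) :
    CConvexSet C K ↔ IsCIntersection C K := by
  obtain ⟨hCc, hCv, hCi, hCs⟩ := hC
  constructor
  · intro hcc
    by_cases hKne : K.Nonempty
    · refine ⟨{x | ∀ p ∈ K, p - x ∈ C}, ?_⟩
      apply Set.Subset.antisymm
      · intro p hp
        exact Set.mem_iInter₂.2 fun x hx => mem_tr.2 (hx p hp)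
      · intro z hz
        by_contra hzK
        obtain ⟨x, hx1, hx2⟩ :=
          exists_sep_translate C K hCc hCv hCi hCs hK hne
            (fun p hp q hq => hcc p hp q hq) hKne z hzK
        have h2 := Set.mem_iInter₂.1 hz x hx1
        exact hx2 (mem_tr.1 h2)
    · rw [Set.not_nonempty_iff_eq_empty] at hKne
      subst hKne
      refine ⟨Set.univ, ?_⟩
      apply Set.Subset.antisymm (Set.empty_subset _)
      intro z hz
      exfalso
      obtain ⟨R, hR⟩ := hCc.isBounded.subset_closedBall (0:P2)
      set w₀ : P2 := (max R 0 + 1, 0) with hw₀def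
      have hw₀ : w₀ ∉ C := by
        intro hw
        have h1 := hR hw
        rw [Metric.mem_closedBall, dist_zero_right] at h1
        have h2 : |max R 0 + 1| ≤ ‖w₀‖ := by
          rw [Prod.norm_def]
          have h3 : ‖w₀.1‖ = |max R 0 + 1| := by rw [hw₀def, Real.norm_eq_abs]
          rw [← h3]
          exact le_max_left _ _
        have h3 : max R 0 + 1 ≤ R := by
          have h4 : (0:ℝ) < max R 0 + 1 := by positivity
          calc max R 0 + 1 = |max R 0 + 1| := (abs_of_pos h4).symm
            _ ≤ ‖w₀‖ := h2
            _ ≤ R := h1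
        have h5 : R ≤ max R 0 := le_max_left R 0
        linarith
      have h2 := Set.mem_iInter₂.1 hz (z - w₀) (Set.mem_univ _)
      rw [mem_tr] at h2
      have h3 : z - (z - w₀) = w₀ := by abel
      rw [h3] at h2
      exact hw₀ h2
  · rintro ⟨T, rfl⟩
    intro p hp q hq z hz
    refine Set.mem_iInter₂.2 fun x hx => ?_
    have hpx : p ∈ tr C x := Set.mem_iInter₂.1 hp x hx
    have hqx : q ∈ tr C x := Set.mem_iInter₂.1 hq x hx
    exact Set.mem_iInter₂.1 hz x ⟨hpx, hqx⟩
end
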